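/- arXiv:1910.02799 — 3 statements merged into one kernel-verified Lean document; each statement's English description precedes it below -/
import Mathlib

section
/- Caccioppoli inequality for ancient solutions of the continuous-time heat equation on a graph: there is a universal constant C such that for any ancient solution u : V × (−∞, 0] → ℝ of ∂_t u = Δu and any R ≥ s (the jump size of the intrinsic metric), R²·∫_{Q_R} Γ(u) + R⁴·∫_{Q_R} (∂_t u)² ≤ C·∫_{Q_{9R}} u², where Q_r = B_r(x₀) × [−r², 0] and ∫_{Q_r} v := ∫_{−r²}^0 ∑_{x ∈ B_r} v(x,t) m_x dt. -/
open scoped BigOperators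
open MeasureTheory

private lemma young2 {x y t : ℝ} (ht : 0 < t) : x*y ≤ t*x^2/2 + y^2/(2*t) := by
  have e : t*x^2/2 + y^2/(2*t) - x*y = (t*x-y)^2/(2*t) := by field_simp; ring
  nlinarith [div_nonneg (sq_nonneg (t*x-y)) (by linarith : (0:ℝ) ≤ 2*t)]

private noncomputable def cutoff (a L d : ℝ) : ℝ := max 0 (min 1 ((a - d)/L))

private lemma cutoff_nonneg (a L d : ℝ) : 0 ≤ cutoff a L d := le_max_left _ _

private lemma cutoff_le_one (a L d : ℝ) : cutoff a L d ≤ 1 :=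
  max_le (by norm_num) (min_le_left _ _)

private lemma cutoff_eq_one {a L d : ℝ} (hL : 0 < L) (h : d ≤ a - L) : cutoff a L d = 1 := by
  have h1 : (1:ℝ) ≤ (a - d)/L := (le_div_iff₀ hL).2 (by linarith)
  rw [cutoff, min_eq_left h1, max_eq_right (by norm_num)]

private lemma cutoff_eq_zero {a L d : ℝ} (hL : 0 < L) (h : a ≤ d) : cutoff a L d = 0 := by
  have h1 : (a - d)/L ≤ 0 := div_nonpos_of_nonpos_of_nonneg (by linarith) hL.le
  exact max_eq_left ((min_le_right _ _).trans h1)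

private lemma cutoff_pos_imp {a L d : ℝ} (hL : 0 < L) (h : cutoff a L d ≠ 0) : d < a := by
  by_contra hc
  exact h (cutoff_eq_zero hL (not_lt.1 hc))

private lemma clip_lip (p q : ℝ) : |max 0 (min 1 p) - max 0 (min 1 q)| ≤ |p - q| := by
  have h1 : |min 1 p - min 1 q| ≤ |p - q| := by
    rcases le_total p 1 with h | h <;> rcases le_total q 1 with h' | h' <;>
      simp [min_eq_left, min_eq_right, *, abs_le] <;> cases abs_le.1 (le_refl |p - q|) <;>
      constructor <;> cases abs_cases (p - q) <;> linarith
  calc |max 0 (min 1 p) - max 0 (min 1 q)|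
      = |min 1 p ⊔ 0 - min 1 q ⊔ 0| := by rw [max_comm 0, max_comm 0]
    _ ≤ |min 1 p - min 1 q| := abs_max_sub_max_le_abs _ _ _
    _ ≤ |p - q| := h1

private lemma cutoff_lip {a L d d' : ℝ} (hL : 0 < L) :
    |cutoff a L d - cutoff a L d'| ≤ |d - d'|/L := by
  have := clip_lip ((a - d)/L) ((a - d')/L)
  rw [div_sub_div_same] at this
  calc |cutoff a L d - cutoff a L d'| ≤ |(a - d - (a - d'))/L| := this
    _ = |d - d'|/L := by rw [abs_div, abs_of_pos hL]; congr 1; rw [abs_sub_comm]; ring_nf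

private lemma swap_sum {V : Type} (A : Finset V) (w : V → V → ℝ) (hw : ∀ x y, w x y = w y x)
    (a : V → V → ℝ) (ha : ∀ x y, a x y = - a y x) (f : V → ℝ) :
    ∑ x ∈ A, ∑ y ∈ A, w x y * a x y * f x
      = -(1/2) * ∑ x ∈ A, ∑ y ∈ A, w x y * a x y * (f y - f x) := by
  have key : ∑ x ∈ A, ∑ y ∈ A, w x y * a x y * f y
      = - ∑ x ∈ A, ∑ y ∈ A, w x y * a x y * f x := by
    rw [Finset.sum_comm, ← Finset.sum_neg_distrib]
    refine Finset.sum_congr rfl fun x _ => ?_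
    rw [← Finset.sum_neg_distrib]
    refine Finset.sum_congr rfl fun y _ => ?_
    rw [hw y x, ha y x]; ring
  have expand : ∑ x ∈ A, ∑ y ∈ A, w x y * a x y * (f y - f x)
      = (∑ x ∈ A, ∑ y ∈ A, w x y * a x y * f y)
        - ∑ x ∈ A, ∑ y ∈ A, w x y * a x y * f x := by
    rw [← Finset.sum_sub_distrib]
    refine Finset.sum_congr rfl fun x _ => ?_
    rw [← Finset.sum_sub_distrib]
    exact Finset.sum_congr rfl fun y _ => by ring
  rw [expand, key]; ring

private lemma sym_sum {V : Type} (A : Finset V) (w c : V → V → ℝ) (hw : ∀ x y, w x y = w y x)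
    (hc : ∀ x y, c x y = c y x) (g : V → ℝ) :
    ∑ x ∈ A, ∑ y ∈ A, w x y * (g y * c x y) = ∑ x ∈ A, ∑ y ∈ A, w x y * (g x * c x y) := by
  rw [Finset.sum_comm]
  refine Finset.sum_congr rfl fun x _ => Finset.sum_congr rfl fun y _ => ?_
  rw [hw y x, hc y x]

private lemma exists_le_integral {g : ℝ → ℝ} {a b : ℝ} (hab : a < b)
    (hc : ContinuousOn g (Set.Icc a b)) (hg : ∀ t ∈ Set.Icc a b, 0 ≤ g t) :
    ∃ t₀ ∈ Set.Icc a b, g t₀ * (b - a) ≤ ∫ t in Set.Icc a b, g t := by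
  obtain ⟨t₀, ht₀, hmin⟩ := isCompact_Icc.exists_isMinOn (Set.nonempty_Icc.2 hab.le) hc
  refine ⟨t₀, ht₀, ?_⟩
  have h1 : ∫ _t in Set.Icc a b, g t₀ ≤ ∫ t in Set.Icc a b, g t := by
    refine setIntegral_mono_on ?_ (hc.integrableOn_Icc) measurableSet_Icc
      (fun x hx => (isMinOn_iff.1 hmin) x hx)
    exact integrableOn_const measure_Icc_lt_top.ne
  have h2 : ∫ _t in Set.Icc a b, g t₀ = (b - a) * g t₀ := by
    rw [setIntegral_const, Real.volume_real_Icc_of_le hab.le, smul_eq_mul]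
  rw [h2] at h1; linarith

private lemma rterm_aux {R ρv e f d a : ℝ} (hR : 0 < R) (hρ : 0 ≤ ρv)
    (hfe : f ≤ e) (hef : e - f ≤ ρv/R) (he : 0 ≤ e) (hf : 0 ≤ f) :
    -(a * (d * (e^2 - f^2))) ≤ (1/2)*(e^2*d^2*ρv^2) + (2/R^2)*a^2 := by
  have h2 : e^2 - f^2 ≤ (ρv/R)*(2*e) := by nlinarith
  have h3 : 0 ≤ e^2 - f^2 := by nlinarith
  have h4 : -(a*(d*(e^2-f^2))) ≤ |a * d| * ((ρv/R)*(2*e)) := by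
    calc -(a*(d*(e^2-f^2))) ≤ |a * d| * (e^2-f^2) := by
          nlinarith [neg_abs_le (a*d), abs_nonneg (a*d)]
      _ ≤ |a * d| * ((ρv/R)*(2*e)) := mul_le_mul_of_nonneg_left h2 (abs_nonneg _)
  have hy := young2 (t := R^2/2) (x := (ρv/R)*e*|d|) (y := |a|) (by positivity)
  have hX2 : ((ρv/R)*e*|d|)^2 = ρv^2*e^2*d^2/R^2 := by
    rw [mul_pow, mul_pow, div_pow, sq_abs]; ring
  rw [hX2, sq_abs] at hy
  have h5 : |a * d| * ((ρv/R)*(2*e)) = 2*((ρv/R)*e*|d| * |a|) := by rw [abs_mul]; ring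
  have h6 : 2*((ρv/R)*e*|d| * |a|) ≤ (1/2)*(e^2*d^2*ρv^2) + (2/R^2)*a^2 := by
    have e1 : (R^2/2)*(ρv^2*e^2*d^2/R^2)/2 = (1/4)*(e^2*d^2*ρv^2) := by field_simp; ring
    have e2 : a^2/(2*(R^2/2)) = (1/2)*(2/R^2*a^2) := by field_simp
    rw [e1, e2] at hy
    linarith
  linarith [h4, h5 ▸ h4]

private lemma rterm_bound {R ρv ex ey dx dy a : ℝ} (hR : 0 < R) (hρ : 0 ≤ ρv)
    (hex : 0 ≤ ex) (hey : 0 ≤ ey) (hlip : |ex - ey| ≤ ρv/R) :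
    -(a * ((ey^2*dy - ex^2*dx) - (min ex ey)^2*(dy - dx)))
      ≤ (1/2)*(ex^2*dx^2*ρv^2 + ey^2*dy^2*ρv^2) + (2/R^2)*a^2 := by
  have hab := abs_le.1 hlip
  rcases le_total ex ey with h | h
  · rw [min_eq_left h]
    have hr : -(a * ((ey^2*dy - ex^2*dx) - ex^2*(dy - dx))) = -(a*(dy*(ey^2-ex^2))) := by ring
    rw [hr]
    have := rterm_aux (e := ey) (f := ex) (d := dy) (a := a) hR hρ h (by linarith) hey hex
    nlinarith [mul_nonneg (mul_nonneg (sq_nonneg ex) (sq_nonneg dx)) (sq_nonneg ρv)]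
  · rw [min_eq_right h]
    have hr : -(a * ((ey^2*dy - ex^2*dx) - ey^2*(dy - dx))) = -((-a)*(dx*(ex^2-ey^2))) := by ring
    rw [hr]
    have := rterm_aux (e := ex) (f := ey) (d := dx) (a := -a) hR hρ h (by linarith) hex hey
    nlinarith [mul_nonneg (mul_nonneg (sq_nonneg ey) (sq_nonneg dy)) (sq_nonneg ρv)]

set_option maxHeartbeats 1000000 in
/-- Parabolic Caccioppoli inequality on graphs with unbounded Laplacians: there is a universal
constant C such that for any weighted graph with an intrinsic metric with finite balls and jump
size s, any ancient solution u of ∂_t u = Δu and any R ≥ s,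
R² ∫_{Q_R} Γ(u) + R⁴ ∫_{Q_R} (∂_t u)² ≤ C ∫_{Q_{9R}} u². -/
theorem parabolic_caccioppoli :
    ∃ C : ℝ, 0 < C ∧
    ∀ (V : Type) (w : V → V → ℝ) (m : V → ℝ) (ρ : V → V → ℝ) (x₀ : V) (s : ℝ),
      (∀ x y, w x y = w y x) → (∀ x y, 0 ≤ w x y) →
      (∀ x, {y | w x y ≠ 0}.Finite) → (∀ x, 0 < m x) →
      (∀ x y, ρ x y = ρ y x) → (∀ x y, 0 ≤ ρ x y) → (∀ x, ρ x x = 0) →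
      (∀ x y z, ρ x z ≤ ρ x y + ρ y z) →
      (∀ x, ∑ᶠ y : V, w x y * ρ x y ^ 2 ≤ m x) →
      ∀ hball : ∀ (x : V) (r : ℝ), {y | ρ y x ≤ r}.Finite,
      (∀ x y, w x y ≠ 0 → ρ x y ≤ s) →
      ∀ u : V → ℝ → ℝ,
        (∀ x t, t ≤ 0 →
          HasDerivWithinAt (u x) ((∑ᶠ y : V, w x y * (u y t - u x t)) / m x) (Set.Iic 0) t) →
      ∀ R : ℝ, s ≤ R →
        R ^ 2 * (∫ t in Set.Icc (-R ^ 2) (0 : ℝ),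
            ∑ x ∈ (hball x₀ R).toFinset,
              ((1 / (2 * m x)) * ∑ᶠ y : V, w x y * (u y t - u x t) ^ 2) * m x)
        + R ^ 4 * (∫ t in Set.Icc (-R ^ 2) (0 : ℝ),
            ∑ x ∈ (hball x₀ R).toFinset,
              ((∑ᶠ y : V, w x y * (u y t - u x t)) / m x) ^ 2 * m x)
        ≤ C * ∫ t in Set.Icc (-(9 * R) ^ 2) (0 : ℝ),
            ∑ x ∈ (hball x₀ (9 * R)).toFinset, (u x t) ^ 2 * m x := by
  refine ⟨100, by norm_num, ?_⟩
  intro V w m ρ x₀ s hws hw0 hwfin hm hρs hρ0 hρxx hρtri hintr hball hjump u hheat R hsR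
  by_cases hR : 0 < R
  case neg =>
    push_neg at hR
    rcases hR.lt_or_eq with hR' | hR'
    · -- R < 0 : all balls empty
      have hemp : ∀ r : ℝ, r < 0 → (hball x₀ r).toFinset = ∅ := by
        intro r hr
        refine Finset.eq_empty_of_forall_notMem fun y hy => ?_
        have h1 : ρ y x₀ ≤ r := ((hball x₀ r).mem_toFinset).1 hy
        exact absurd (le_trans (hρ0 y x₀) h1) (not_le.2 hr)
      rw [hemp R hR', hemp (9*R) (by linarith)]
      simp
    · -- R = 0
      subst hR'
      have h0 : (0:ℝ) ≤ ∫ t in Set.Icc (-(9 * 0:ℝ) ^ 2) (0 : ℝ),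
          ∑ x ∈ (hball x₀ (9 * 0)).toFinset, (u x t) ^ 2 * m x := by
        apply setIntegral_nonneg measurableSet_Icc
        intro t _
        exact Finset.sum_nonneg fun x _ => mul_nonneg (sq_nonneg _) (hm x).le
      norm_num at h0 ⊢
  case pos =>
  -- main case
  classical
  have hm0 : ∀ x : V, m x ≠ 0 := fun x => ne_of_gt (hm x)
  have memB : ∀ (r : ℝ) (y : V), y ∈ (hball x₀ r).toFinset ↔ ρ y x₀ ≤ r := by
    intro r y; exact (hball x₀ r).mem_toFinset
  have hd_abs : ∀ x y : V, |ρ x x₀ - ρ y x₀| ≤ ρ x y := by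
    intro x y
    rw [abs_sub_le_iff]
    constructor
    · linarith [hρtri x y x₀]
    · have := hρtri y x x₀; rw [hρs y x] at this; linarith
  have hnb : ∀ x y : V, w x y ≠ 0 → ρ y x₀ ≤ ρ x x₀ + R := by
    intro x y h
    have h1 := hρtri y x x₀
    have h2 : ρ y x ≤ R := by rw [hρs y x]; exact le_trans (hjump x y h) hsR
    linarith
  set A := (hball x₀ (9*R)).toFinset with hAdef
  set B1 := (hball x₀ R).toFinset with hB1def
  set B3 := (hball x₀ (3*R)).toFinset with hB3def
  have hB1A : B1 ⊆ A := fun y hy => (memB _ y).2 (le_trans ((memB _ y).1 hy) (by linarith))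
  have hB3A : B3 ⊆ A := fun y hy => (memB _ y).2 (le_trans ((memB _ y).1 hy) (by linarith))
  have hB13 : B1 ⊆ B3 := fun y hy => (memB _ y).2 (le_trans ((memB _ y).1 hy) (by linarith))
  -- cutoffs
  obtain ⟨η₁, hη₁⟩ : ∃ f : V → ℝ, ∀ x, f x = cutoff (4*R) R (ρ x x₀) := ⟨_, fun _ => rfl⟩
  obtain ⟨η₂, hη₂⟩ : ∃ f : V → ℝ, ∀ x, f x = cutoff (2*R) R (ρ x x₀) := ⟨_, fun _ => rfl⟩
  have hη₁0 : ∀ x, 0 ≤ η₁ x := fun x => (hη₁ x).symm ▸ cutoff_nonneg _ _ _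
  have hη₂0 : ∀ x, 0 ≤ η₂ x := fun x => (hη₂ x).symm ▸ cutoff_nonneg _ _ _
  have hη₁1 : ∀ x, η₁ x ≤ 1 := fun x => (hη₁ x).symm ▸ cutoff_le_one _ _ _
  have hη₂1 : ∀ x, η₂ x ≤ 1 := fun x => (hη₂ x).symm ▸ cutoff_le_one _ _ _
  have hη₁one : ∀ x, ρ x x₀ ≤ 3*R → η₁ x = 1 := by
    intro x hx; rw [hη₁ x]; exact cutoff_eq_one hR (by linarith)
  have hη₂one : ∀ x, ρ x x₀ ≤ R → η₂ x = 1 := by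
    intro x hx; rw [hη₂ x]; exact cutoff_eq_one hR (by linarith)
  have hη₁supp : ∀ x, η₁ x ≠ 0 → ρ x x₀ ≤ 4*R := by
    intro x hx
    rw [hη₁ x] at hx
    exact (cutoff_pos_imp hR hx).le
  have hη₂supp : ∀ x, η₂ x ≠ 0 → ρ x x₀ ≤ 2*R := by
    intro x hx
    rw [hη₂ x] at hx
    exact (cutoff_pos_imp hR hx).le
  have hη₂z : ∀ x, 2*R ≤ ρ x x₀ → η₂ x = 0 := fun x hx => (hη₂ x).symm ▸ cutoff_eq_zero hR hx
  have hη₁lip : ∀ x y, |η₁ x - η₁ y| ≤ ρ x y / R := by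
    intro x y
    rw [hη₁ x, hη₁ y]
    refine le_trans (cutoff_lip hR) ?_
    gcongr
    exact hd_abs x y
  have hη₂lip : ∀ x y, |η₂ x - η₂ y| ≤ ρ x y / R := by
    intro x y
    rw [hη₂ x, hη₂ y]
    refine le_trans (cutoff_lip hR) ?_
    gcongr
    exact hd_abs x y
  -- finsum representations
  have hfinA : ∀ x : V, ρ x x₀ ≤ 8*R → ∀ g : V → ℝ,
      (∑ᶠ y, w x y * g y) = ∑ y ∈ A, w x y * g y := by
    intro x hx g
    refine finsum_eq_sum_of_support_subset _ fun y hy => ?_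
    have hwne : w x y ≠ 0 := left_ne_zero_of_mul hy
    have := hnb x y hwne
    rw [Finset.mem_coe]
    exact (memB _ y).2 (by linarith)
  have hρm : ∀ x : V, ∑ y ∈ A, w x y * ρ x y ^ 2 ≤ m x := by
    intro x
    have h1 : ∑ y ∈ A, w x y * ρ x y ^ 2 ≤ ∑ y ∈ A ∪ (hwfin x).toFinset, w x y * ρ x y ^ 2 := by
      refine Finset.sum_le_sum_of_subset_of_nonneg Finset.subset_union_left fun y _ _ => ?_
      exact mul_nonneg (hw0 x y) (sq_nonneg _)
    have h2 : ∑ y ∈ A ∪ (hwfin x).toFinset, w x y * ρ x y ^ 2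
        = ∑ y ∈ (hwfin x).toFinset, w x y * ρ x y ^ 2 := by
      refine (Finset.sum_subset Finset.subset_union_right fun y _ hy => ?_).symm
      have : ¬ (w x y ≠ 0) := fun h => hy ((Set.Finite.mem_toFinset _).2 h)
      push_neg at this
      rw [this, zero_mul]
    have h3 : (∑ᶠ y, w x y * ρ x y ^ 2) = ∑ y ∈ (hwfin x).toFinset, w x y * ρ x y ^ 2 := by
      refine finsum_eq_sum_of_support_subset _ fun y hy => ?_
      rw [Finset.mem_coe, Set.Finite.mem_toFinset]
      exact left_ne_zero_of_mul hy
    have h4 : ∑ y ∈ (hwfin x).toFinset, w x y * ρ x y ^ 2 ≤ m x := h3 ▸ hintr x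
    linarith [h1.trans_eq h2]
  -- local definitions
  obtain ⟨du, hdu⟩ : ∃ f : V → ℝ → ℝ, ∀ x t, f x t = (∑ᶠ (y : V), w x y * (u y t - u x t)) / m x :=
    ⟨_, fun _ _ => rfl⟩
  have hheat' : ∀ x t, t ≤ 0 → HasDerivWithinAt (u x) (du x t) (Set.Iic 0) t := by
    intro x t ht
    rw [hdu]
    exact hheat x t ht
  obtain ⟨L, hLdef⟩ : ∃ f : V → ℝ → ℝ, ∀ x t, f x t = ∑ y ∈ A, w x y * (u y t - u x t) :=
    ⟨_, fun _ _ => rfl⟩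
  obtain ⟨Γ2, hΓ2def⟩ : ∃ f : V → ℝ → ℝ, ∀ x t, f x t = ∑ y ∈ A, w x y * (u y t - u x t) ^ 2 :=
    ⟨_, fun _ _ => rfl⟩
  have hdu_rep : ∀ x : V, ρ x x₀ ≤ 8*R → ∀ t, du x t = L x t / m x := by
    intro x hx t
    rw [hdu, hLdef, hfinA x hx (fun y => u y t - u x t)]
  have hΓ2_rep : ∀ x : V, ρ x x₀ ≤ 8*R → ∀ t,
      (∑ᶠ (y : V), w x y * (u y t - u x t) ^ 2) = Γ2 x t := by
    intro x hx t
    rw [hΓ2def, hfinA x hx (fun y => (u y t - u x t) ^ 2)]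
  obtain ⟨M, hMdef⟩ : ∃ f : ℝ → ℝ, ∀ t, f t = ∑ x ∈ A, (u x t) ^ 2 * m x := ⟨_, fun _ => rfl⟩
  obtain ⟨E, hEdef⟩ : ∃ f : ℝ → ℝ, ∀ t, f t = ∑ x ∈ A, η₁ x ^ 2 * (u x t) ^ 2 * m x :=
    ⟨_, fun _ => rfl⟩
  obtain ⟨Ed, hEddef⟩ : ∃ f : ℝ → ℝ, ∀ t, f t = ∑ x ∈ A, η₁ x ^ 2 * (2 * u x t * du x t) * m x :=
    ⟨_, fun _ => rfl⟩
  obtain ⟨F, hFdef⟩ : ∃ f : ℝ → ℝ, ∀ t, f t = ∑ x ∈ A, η₂ x ^ 2 * (du x t) ^ 2 * m x :=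
    ⟨_, fun _ => rfl⟩
  obtain ⟨G, hGdef⟩ : ∃ f : ℝ → ℝ, ∀ t, f t =
      ∑ x ∈ A, ∑ y ∈ A, w x y * min (η₂ x) (η₂ y) ^ 2 * (u y t - u x t) ^ 2 := ⟨_, fun _ => rfl⟩
  obtain ⟨Gd, hGddef⟩ : ∃ f : ℝ → ℝ, ∀ t, f t =
      ∑ x ∈ A, ∑ y ∈ A, w x y * min (η₂ x) (η₂ y) ^ 2 *
        (2 * (u y t - u x t) * (du y t - du x t)) := ⟨_, fun _ => rfl⟩
  obtain ⟨g3, hg3def⟩ : ∃ f : ℝ → ℝ, ∀ t, f t = ∑ x ∈ B3, Γ2 x t := ⟨_, fun _ => rfl⟩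
  set J := ∫ t in Set.Icc (-(9*R)^2) (0:ℝ), M t with hJdef
  -- continuity
  have hu_cont : ∀ x, ContinuousOn (u x) (Set.Iic 0) :=
    fun x t ht => (hheat' x t ht).continuousWithinAt
  have hdu_cont : ∀ x, ContinuousOn (du x) (Set.Iic 0) := by
    intro x
    have hrep : du x = fun t =>
        (∑ y ∈ (hwfin x).toFinset, w x y * (u y t - u x t)) / m x := by
      funext t
      rw [hdu]
      congr 1
      refine finsum_eq_sum_of_support_subset _ fun y hy => ?_
      rw [Finset.mem_coe, Set.Finite.mem_toFinset]
      exact left_ne_zero_of_mul hy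
    rw [hrep]
    exact (continuousOn_finset_sum _ fun y _ =>
      continuousOn_const.mul ((hu_cont y).sub (hu_cont x))).div_const _
  have hM_cont : ContinuousOn M (Set.Iic 0) := by
    have : M = fun t => ∑ x ∈ A, (u x t) ^ 2 * m x := funext hMdef
    rw [this]
    exact continuousOn_finset_sum _ fun x _ => ((hu_cont x).pow 2).mul continuousOn_const
  have hE_cont : ContinuousOn E (Set.Iic 0) := by
    have : E = fun t => ∑ x ∈ A, η₁ x ^ 2 * (u x t) ^ 2 * m x := funext hEdef
    rw [this]
    exact continuousOn_finset_sum _ fun x _ =>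
      (continuousOn_const.mul ((hu_cont x).pow 2)).mul continuousOn_const
  have hEd_cont : ContinuousOn Ed (Set.Iic 0) := by
    have : Ed = fun t => ∑ x ∈ A, η₁ x ^ 2 * (2 * u x t * du x t) * m x := funext hEddef
    rw [this]
    exact continuousOn_finset_sum _ fun x _ =>
      (continuousOn_const.mul ((continuousOn_const.mul (hu_cont x)).mul (hdu_cont x))).mul
        continuousOn_const
  have hF_cont : ContinuousOn F (Set.Iic 0) := by
    have : F = fun t => ∑ x ∈ A, η₂ x ^ 2 * (du x t) ^ 2 * m x := funext hFdef
    rw [this]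
    exact continuousOn_finset_sum _ fun x _ =>
      (continuousOn_const.mul ((hdu_cont x).pow 2)).mul continuousOn_const
  have hΓ2_cont : ∀ x, ContinuousOn (Γ2 x) (Set.Iic 0) := by
    intro x
    have : Γ2 x = fun t => ∑ y ∈ A, w x y * (u y t - u x t) ^ 2 := funext (hΓ2def x)
    rw [this]
    exact continuousOn_finset_sum _ fun y _ =>
      continuousOn_const.mul (((hu_cont y).sub (hu_cont x)).pow 2)
  have hg3_cont : ContinuousOn g3 (Set.Iic 0) := by
    have : g3 = fun t => ∑ x ∈ B3, Γ2 x t := funext hg3def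
    rw [this]
    exact continuousOn_finset_sum _ fun x _ => hΓ2_cont x
  have hGd_cont : ContinuousOn Gd (Set.Iic 0) := by
    have : Gd = fun t => ∑ x ∈ A, ∑ y ∈ A, w x y * min (η₂ x) (η₂ y) ^ 2 *
        (2 * (u y t - u x t) * (du y t - du x t)) := funext hGddef
    rw [this]
    exact continuousOn_finset_sum _ fun x _ => continuousOn_finset_sum _ fun y _ =>
      continuousOn_const.mul ((continuousOn_const.mul ((hu_cont y).sub (hu_cont x))).mul
        ((hdu_cont y).sub (hdu_cont x)))
  -- nonnegativity
  have hM0 : ∀ t, 0 ≤ M t := by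
    intro t
    rw [hMdef]
    exact Finset.sum_nonneg fun x _ => mul_nonneg (sq_nonneg _) (hm x).le
  have hE0 : ∀ t, 0 ≤ E t := by
    intro t
    rw [hEdef]
    exact Finset.sum_nonneg fun x _ =>
      mul_nonneg (mul_nonneg (sq_nonneg _) (sq_nonneg _)) (hm x).le
  have hΓ20 : ∀ x t, 0 ≤ Γ2 x t := by
    intro x t
    rw [hΓ2def]
    exact Finset.sum_nonneg fun y _ => mul_nonneg (hw0 x y) (sq_nonneg _)
  have hg30 : ∀ t, 0 ≤ g3 t := by
    intro t
    rw [hg3def]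
    exact Finset.sum_nonneg fun x _ => hΓ20 x t
  have hF0 : ∀ t, 0 ≤ F t := by
    intro t
    rw [hFdef]
    exact Finset.sum_nonneg fun x _ =>
      mul_nonneg (mul_nonneg (sq_nonneg _) (sq_nonneg _)) (hm x).le
  have hG0 : ∀ t, 0 ≤ G t := by
    intro t
    rw [hGdef]
    exact Finset.sum_nonneg fun x _ => Finset.sum_nonneg fun y _ =>
      mul_nonneg (mul_nonneg (hw0 x y) (sq_nonneg _)) (sq_nonneg _)
  have hE_le_M : ∀ t, E t ≤ M t := by
    intro t
    rw [hEdef, hMdef]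
    refine Finset.sum_le_sum fun x _ => ?_
    have h1 : η₁ x ^ 2 ≤ 1 := by nlinarith [hη₁0 x, hη₁1 x]
    nlinarith [mul_nonneg (sq_nonneg (u x t)) (hm x).le]
  -- derivative facts
  have hE_deriv : ∀ t, t ≤ 0 → HasDerivWithinAt E (Ed t) (Set.Iic 0) t := by
    intro t ht
    have : E = fun t => ∑ x ∈ A, η₁ x ^ 2 * (u x t) ^ 2 * m x := funext hEdef
    rw [this, hEddef]
    refine HasDerivWithinAt.fun_sum fun x _ => ?_
    have h := (((hheat' x t ht).fun_pow 2).const_mul (η₁ x ^ 2)).mul_const (m x)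
    refine h.congr_deriv ?_
    push_cast
    ring
  have hG_deriv : ∀ t, t ≤ 0 → HasDerivWithinAt G (Gd t) (Set.Iic 0) t := by
    intro t ht
    have : G = fun t => ∑ x ∈ A, ∑ y ∈ A, w x y * min (η₂ x) (η₂ y) ^ 2 *
        (u y t - u x t) ^ 2 := funext hGdef
    rw [this, hGddef]
    refine HasDerivWithinAt.fun_sum fun x _ => HasDerivWithinAt.fun_sum fun y _ => ?_
    have h := (((hheat' y t ht).sub (hheat' x t ht)).fun_pow 2).const_mul
      (w x y * min (η₂ x) (η₂ y) ^ 2)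
    refine h.congr_deriv ?_
    push_cast [Pi.sub_apply]
    ring
  -- integral helper lemmas
  have hFTC : ∀ (f fd : ℝ → ℝ) (a : ℝ), a ≤ 0 →
      (∀ t, t ≤ 0 → HasDerivWithinAt f (fd t) (Set.Iic 0) t) →
      ContinuousOn fd (Set.Iic 0) → ∫ t in a..0, fd t = f 0 - f a := by
    intro f fd a ha hd hc
    have hIcc : Set.Icc a (0:ℝ) ⊆ Set.Iic 0 := fun z hz => hz.2
    refine intervalIntegral.integral_eq_sub_of_hasDeriv_right_of_le ha
      (fun z hz => ((hd z hz.2).continuousWithinAt).mono hIcc)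
      (fun z hz => ((hd z hz.2.le).hasDerivAt (Iic_mem_nhds hz.2)).hasDerivWithinAt) ?_
    have : ContinuousOn fd (Set.uIcc a 0) := by
      rw [Set.uIcc_of_le ha]
      exact hc.mono hIcc
    exact this.intervalIntegrable
  have hseteq : ∀ (f : ℝ → ℝ) (a : ℝ), a ≤ 0 →
      (∫ t in Set.Icc a (0:ℝ), f t) = ∫ t in a..0, f t := by
    intro f a ha
    rw [MeasureTheory.integral_Icc_eq_integral_Ioc, intervalIntegral.integral_of_le ha]
  have hmono2 : ∀ (f : ℝ → ℝ) (a b c : ℝ), c ≤ a → b ≤ 0 → ContinuousOn f (Set.Iic 0) →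
      (∀ t, t ≤ 0 → 0 ≤ f t) →
      (∫ t in Set.Icc a b, f t) ≤ ∫ t in Set.Icc c (0:ℝ), f t := by
    intro f a b c hca hb0 hc hf
    refine setIntegral_mono_set ((hc.mono (fun z hz => hz.2)).integrableOn_Icc) ?_ ?_
    · exact (ae_restrict_iff' measurableSet_Icc).2 (ae_of_all _ fun t ht => hf t ht.2)
    · exact HasSubset.Subset.eventuallyLE (Set.Icc_subset_Icc hca hb0)
  have hintmono : ∀ (f h : ℝ → ℝ) (a : ℝ), a ≤ 0 → ContinuousOn f (Set.Iic 0) →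
      ContinuousOn h (Set.Iic 0) → (∀ t, a ≤ t → t ≤ 0 → f t ≤ h t) →
      (∫ t in a..0, f t) ≤ ∫ t in a..0, h t := by
    intro f h a ha hf hh hle
    have hIcc : Set.Icc a (0:ℝ) ⊆ Set.Iic 0 := fun z hz => hz.2
    refine intervalIntegral.integral_mono_on ha ?_ ?_ (fun t ht => hle t ht.1 ht.2)
    · exact ContinuousOn.intervalIntegrable (by rw [Set.uIcc_of_le ha]; exact hf.mono hIcc)
    · exact ContinuousOn.intervalIntegrable (by rw [Set.uIcc_of_le ha]; exact hh.mono hIcc)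
  have hintegrable : ∀ (f : ℝ → ℝ) (a : ℝ), a ≤ 0 → ContinuousOn f (Set.Iic 0) →
      IntervalIntegrable f volume a 0 := by
    intro f a ha hf
    exact ContinuousOn.intervalIntegrable
      (by rw [Set.uIcc_of_le ha]; exact hf.mono (fun z hz => hz.2))
  -- Step 1 core pointwise inequality
  have hcore1 : ∀ t, t ≤ 0 → Ed t + (1/4) * g3 t ≤ (2/R^2) * M t := by
    intro t ht
    -- (a) rewrite Ed as a double sum
    have ea : Ed t = 2 * ∑ x ∈ A, ∑ y ∈ A,
        w x y * (u y t - u x t) * (η₁ x ^ 2 * u x t) := by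
      rw [hEddef, Finset.mul_sum]
      refine Finset.sum_congr rfl fun x _ => ?_
      by_cases hz : η₁ x = 0
      · rw [hz]
        simp
      · have hd8 : ρ x x₀ ≤ 8*R := le_trans (hη₁supp x hz) (by linarith)
        have h1 : ∑ y ∈ A, w x y * (u y t - u x t) * (η₁ x ^ 2 * u x t)
            = (η₁ x ^ 2 * u x t) * L x t := by
          rw [hLdef, Finset.mul_sum]
          exact Finset.sum_congr rfl fun y _ => by ring
        rw [h1, hdu_rep x hd8 t]
        field_simp
        rw [mul_div_cancel_right₀ _ (hm0 x)]
    have eb := swap_sum A w hws (fun x y => u y t - u x t) (fun x y => by ring)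
      (fun x => η₁ x ^ 2 * u x t)
    have keyE : Ed t = - ∑ x ∈ A, ∑ y ∈ A, w x y * (u y t - u x t) *
        (η₁ y ^ 2 * u y t - η₁ x ^ 2 * u x t) := by
      rw [ea, eb]
      ring
    -- termwise bound
    have ec : ∀ x ∈ A, ∀ y ∈ A,
        -(w x y * (u y t - u x t) * (η₁ y ^ 2 * u y t - η₁ x ^ 2 * u x t))
          ≤ -(w x y * (η₁ y ^ 2 * (u y t - u x t) ^ 2))
            + ((1/4) * (w x y * ((η₁ x ^ 2 + η₁ y ^ 2) * (u y t - u x t) ^ 2))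
              + (2/R^2) * (w x y * ((u x t) ^ 2 * ρ x y ^ 2))) := by
      intro x _ y _
      have hlip := hη₁lip x y
      have h2 : (η₁ x - η₁ y)^2 ≤ ρ x y ^2 / R^2 := by
        have h3 : |η₁ x - η₁ y|^2 ≤ (ρ x y / R)^2 :=
          pow_le_pow_left₀ (abs_nonneg _) hlip 2
        rw [sq_abs, div_pow] at h3
        exact h3
      have hs : 0 ≤ (1/4) * ((η₁ x ^ 2 + η₁ y ^ 2) * (u y t - u x t) ^ 2)
          + (2/R^2) * ((u x t) ^ 2 * ρ x y ^ 2)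
          + (u y t - u x t) * u x t * (η₁ y ^ 2 - η₁ x ^ 2) := by
        have hRne : R ^ 2 ≠ 0 := by positivity
        have hcert := sq_nonneg ((η₁ x + η₁ y) * (u y t - u x t) - 4 * (η₁ x - η₁ y) * u x t)
        have hd2 : 0 ≤ (ρ x y ^2 / R^2 - (η₁ x - η₁ y)^2) * (u x t)^2 :=
          mul_nonneg (by linarith) (sq_nonneg _)
        have hd3 : (2/R^2) * ((u x t) ^ 2 * ρ x y ^ 2)
            = 2 * (ρ x y ^2 / R^2) * (u x t)^2 := by field_simp
        nlinarith [sq_nonneg ((η₁ x - η₁ y) * (u y t - u x t))]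
      nlinarith [mul_nonneg (hw0 x y) hs]
    -- sum the termwise bound
    have esum : - ∑ x ∈ A, ∑ y ∈ A, w x y * (u y t - u x t) *
          (η₁ y ^ 2 * u y t - η₁ x ^ 2 * u x t)
        ≤ ∑ x ∈ A, ∑ y ∈ A,
          (-(w x y * (η₁ y ^ 2 * (u y t - u x t) ^ 2))
            + ((1/4) * (w x y * ((η₁ x ^ 2 + η₁ y ^ 2) * (u y t - u x t) ^ 2))
              + (2/R^2) * (w x y * ((u x t) ^ 2 * ρ x y ^ 2)))) := by
      have : - ∑ x ∈ A, ∑ y ∈ A, w x y * (u y t - u x t) *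
          (η₁ y ^ 2 * u y t - η₁ x ^ 2 * u x t)
          = ∑ x ∈ A, ∑ y ∈ A, -(w x y * (u y t - u x t) *
            (η₁ y ^ 2 * u y t - η₁ x ^ 2 * u x t)) := by
        simp [Finset.sum_neg_distrib]
      rw [this]
      exact Finset.sum_le_sum fun x hx => Finset.sum_le_sum fun y hy => ec x hx y hy
    -- split the RHS
    have esplit : ∑ x ∈ A, ∑ y ∈ A,
          (-(w x y * (η₁ y ^ 2 * (u y t - u x t) ^ 2))
            + ((1/4) * (w x y * ((η₁ x ^ 2 + η₁ y ^ 2) * (u y t - u x t) ^ 2))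
              + (2/R^2) * (w x y * ((u x t) ^ 2 * ρ x y ^ 2))))
        = - (∑ x ∈ A, ∑ y ∈ A, w x y * (η₁ y ^ 2 * (u y t - u x t) ^ 2))
          + ((1/4) * (∑ x ∈ A, ∑ y ∈ A, w x y * ((η₁ x ^ 2 + η₁ y ^ 2) * (u y t - u x t) ^ 2))
            + (2/R^2) * (∑ x ∈ A, ∑ y ∈ A, w x y * ((u x t) ^ 2 * ρ x y ^ 2))) := by
      simp only [Finset.sum_add_distrib, Finset.sum_neg_distrib, ← Finset.mul_sum]
    -- symmetry identities
    have hsym1 : ∑ x ∈ A, ∑ y ∈ A, w x y * (η₁ y ^ 2 * (u y t - u x t) ^ 2)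
        = ∑ x ∈ A, ∑ y ∈ A, w x y * (η₁ x ^ 2 * (u y t - u x t) ^ 2) :=
      sym_sum A w (fun x y => (u y t - u x t) ^ 2) hws (fun x y => by ring) (fun v => η₁ v ^ 2)
    have hsym2 : ∑ x ∈ A, ∑ y ∈ A, w x y * ((η₁ x ^ 2 + η₁ y ^ 2) * (u y t - u x t) ^ 2)
        = 2 * ∑ x ∈ A, ∑ y ∈ A, w x y * (η₁ x ^ 2 * (u y t - u x t) ^ 2) := by
      have e1 : ∀ x ∈ A, ∀ y ∈ A, w x y * ((η₁ x ^ 2 + η₁ y ^ 2) * (u y t - u x t) ^ 2)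
          = w x y * (η₁ x ^ 2 * (u y t - u x t) ^ 2)
            + w x y * (η₁ y ^ 2 * (u y t - u x t) ^ 2) := fun x _ y _ => by ring
      calc ∑ x ∈ A, ∑ y ∈ A, w x y * ((η₁ x ^ 2 + η₁ y ^ 2) * (u y t - u x t) ^ 2)
          = ∑ x ∈ A, ∑ y ∈ A, (w x y * (η₁ x ^ 2 * (u y t - u x t) ^ 2)
            + w x y * (η₁ y ^ 2 * (u y t - u x t) ^ 2)) := by
            exact Finset.sum_congr rfl fun x hx => Finset.sum_congr rfl fun y hy => e1 x hx y hy
        _ = (∑ x ∈ A, ∑ y ∈ A, w x y * (η₁ x ^ 2 * (u y t - u x t) ^ 2))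
            + ∑ x ∈ A, ∑ y ∈ A, w x y * (η₁ y ^ 2 * (u y t - u x t) ^ 2) := by
            simp [Finset.sum_add_distrib]
        _ = 2 * ∑ x ∈ A, ∑ y ∈ A, w x y * (η₁ x ^ 2 * (u y t - u x t) ^ 2) := by
            rw [hsym1]; ring
    -- bound on the mass term
    have hmass : ∑ x ∈ A, ∑ y ∈ A, w x y * ((u x t) ^ 2 * ρ x y ^ 2) ≤ M t := by
      rw [hMdef]
      refine Finset.sum_le_sum fun x _ => ?_
      have e1 : ∑ y ∈ A, w x y * ((u x t) ^ 2 * ρ x y ^ 2)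
          = (u x t)^2 * ∑ y ∈ A, w x y * ρ x y ^ 2 := by
        rw [Finset.mul_sum]
        exact Finset.sum_congr rfl fun y _ => by ring
      rw [e1]
      exact mul_le_mul_of_nonneg_left (hρm x) (sq_nonneg _)
    -- lower bound of the gradient term
    have hgrad : g3 t ≤ ∑ x ∈ A, ∑ y ∈ A, w x y * (η₁ x ^ 2 * (u y t - u x t) ^ 2) := by
      rw [hg3def]
      have e1 : ∀ x ∈ B3, Γ2 x t = ∑ y ∈ A, w x y * (η₁ x ^ 2 * (u y t - u x t) ^ 2) := by
        intro x hx
        rw [hΓ2def]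
        refine Finset.sum_congr rfl fun y _ => ?_
        rw [hη₁one x ((memB _ x).1 hx)]
        ring
      rw [Finset.sum_congr rfl e1]
      refine Finset.sum_le_sum_of_subset_of_nonneg hB3A fun x _ _ => ?_
      exact Finset.sum_nonneg fun y _ =>
        mul_nonneg (hw0 x y) (mul_nonneg (sq_nonneg _) (sq_nonneg _))
    -- combine
    have hS1 : Ed t ≤ -(1/2) * (∑ x ∈ A, ∑ y ∈ A, w x y * (η₁ x ^ 2 * (u y t - u x t) ^ 2))
        + (2/R^2) * M t := by
      rw [keyE]
      calc - ∑ x ∈ A, ∑ y ∈ A, w x y * (u y t - u x t) *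
            (η₁ y ^ 2 * u y t - η₁ x ^ 2 * u x t)
          ≤ _ := esum
        _ = - (∑ x ∈ A, ∑ y ∈ A, w x y * (η₁ y ^ 2 * (u y t - u x t) ^ 2))
            + ((1/4) * (∑ x ∈ A, ∑ y ∈ A, w x y * ((η₁ x ^ 2 + η₁ y ^ 2) * (u y t - u x t) ^ 2))
              + (2/R^2) * (∑ x ∈ A, ∑ y ∈ A, w x y * ((u x t) ^ 2 * ρ x y ^ 2))) := esplit
        _ = -(1/2) * (∑ x ∈ A, ∑ y ∈ A, w x y * (η₁ x ^ 2 * (u y t - u x t) ^ 2))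
            + (2/R^2) * (∑ x ∈ A, ∑ y ∈ A, w x y * ((u x t) ^ 2 * ρ x y ^ 2)) := by
            rw [hsym1, hsym2]; ring
        _ ≤ -(1/2) * (∑ x ∈ A, ∑ y ∈ A, w x y * (η₁ x ^ 2 * (u y t - u x t) ^ 2))
            + (2/R^2) * M t := by
            have h2R : (0:ℝ) ≤ 2/R^2 := by positivity
            have := mul_le_mul_of_nonneg_left hmass h2R
            linarith
    linarith [hgrad, hg30 t, hS1]
  -- Step 2 core pointwise inequality
  have hcore2 : ∀ t, t ≤ 0 → (1/2) * F t + (1/4) * Gd t ≤ (1/R^2) * g3 t := by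
    intro t ht
    have ea2 : F t = ∑ x ∈ A, ∑ y ∈ A,
        w x y * (u y t - u x t) * (η₂ x ^ 2 * du x t) := by
      rw [hFdef]
      refine Finset.sum_congr rfl fun x _ => ?_
      by_cases hz : η₂ x = 0
      · rw [hz]
        simp
      · have hd8 : ρ x x₀ ≤ 8*R := le_trans (hη₂supp x hz) (by linarith)
        have h1 : ∑ y ∈ A, w x y * (u y t - u x t) * (η₂ x ^ 2 * du x t)
            = (η₂ x ^ 2 * du x t) * L x t := by
          rw [hLdef, Finset.mul_sum]
          exact Finset.sum_congr rfl fun y _ => by ring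
        rw [h1, hdu_rep x hd8 t]
        have hmm : m x * (m x)⁻¹ ^ 2 = (m x)⁻¹ := by
          rw [pow_two, ← mul_assoc, mul_inv_cancel₀ (hm0 x), one_mul]
        field_simp
    have eb2 := swap_sum A w hws (fun x y => u y t - u x t) (fun x y => by ring)
      (fun x => η₂ x ^ 2 * du x t)
    have keyF : F t = -(1/2) * ∑ x ∈ A, ∑ y ∈ A, w x y * (u y t - u x t) *
        (η₂ y ^ 2 * du y t - η₂ x ^ 2 * du x t) := by
      rw [ea2, eb2]
    have hsplit : ∑ x ∈ A, ∑ y ∈ A, w x y * (u y t - u x t) *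
          (η₂ y ^ 2 * du y t - η₂ x ^ 2 * du x t)
        = (1/2) * Gd t + ∑ x ∈ A, ∑ y ∈ A, w x y * (u y t - u x t) *
            ((η₂ y ^ 2 * du y t - η₂ x ^ 2 * du x t)
              - min (η₂ x) (η₂ y) ^ 2 * (du y t - du x t)) := by
      rw [hGddef]
      have e1 : ∀ x ∈ A, ∀ y ∈ A, w x y * (u y t - u x t) *
            (η₂ y ^ 2 * du y t - η₂ x ^ 2 * du x t)
          = (1/2) * (w x y * min (η₂ x) (η₂ y) ^ 2 *
              (2 * (u y t - u x t) * (du y t - du x t)))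
            + w x y * (u y t - u x t) *
              ((η₂ y ^ 2 * du y t - η₂ x ^ 2 * du x t)
                - min (η₂ x) (η₂ y) ^ 2 * (du y t - du x t)) := fun x _ y _ => by ring
      rw [Finset.sum_congr rfl fun x hx => Finset.sum_congr rfl fun y hy => e1 x hx y hy]
      simp only [Finset.sum_add_distrib, ← Finset.mul_sum]
    have keyF2 : F t = -(1/4) * Gd t - (1/2) * ∑ x ∈ A, ∑ y ∈ A,
        w x y * (u y t - u x t) * ((η₂ y ^ 2 * du y t - η₂ x ^ 2 * du x t)
          - min (η₂ x) (η₂ y) ^ 2 * (du y t - du x t)) := by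
      rw [keyF, hsplit]
      ring
    -- restrict the remainder double sum to B3
    have hX2res : ∑ x ∈ B3, ∑ y ∈ A, w x y * (u y t - u x t) *
          ((η₂ y ^ 2 * du y t - η₂ x ^ 2 * du x t)
            - min (η₂ x) (η₂ y) ^ 2 * (du y t - du x t))
        = ∑ x ∈ A, ∑ y ∈ A, w x y * (u y t - u x t) *
          ((η₂ y ^ 2 * du y t - η₂ x ^ 2 * du x t)
            - min (η₂ x) (η₂ y) ^ 2 * (du y t - du x t)) := by
      refine Finset.sum_subset hB3A fun x _ hxB3 => ?_
      refine Finset.sum_eq_zero fun y _ => ?_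
      have hx3 : ¬ ρ x x₀ ≤ 3*R := fun h => hxB3 ((memB _ x).2 h)
      push_neg at hx3
      by_cases hwz : w x y = 0
      · rw [hwz]
        ring
      · have hηx : η₂ x = 0 := hη₂z x (by linarith)
        have hηy : η₂ y = 0 := by
          refine hη₂z y ?_
          have h1 := hρtri x y x₀
          have h2 : ρ x y ≤ R := le_trans (hjump x y hwz) hsR
          linarith
        rw [hηx, hηy]
        norm_num
    -- termwise bound on the remainder
    have tb : ∀ x ∈ B3, ∀ y ∈ A,
        -((1/2) * (w x y * (u y t - u x t) *
          ((η₂ y ^ 2 * du y t - η₂ x ^ 2 * du x t)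
            - min (η₂ x) (η₂ y) ^ 2 * (du y t - du x t))))
        ≤ (1/4) * (w x y * (η₂ x ^ 2 * du x t ^ 2 * ρ x y ^ 2
            + η₂ y ^ 2 * du y t ^ 2 * ρ x y ^ 2))
          + (1/R^2) * (w x y * (u y t - u x t) ^ 2) := by
      intro x _ y _
      have hsc := rterm_bound (R := R) (ρv := ρ x y) (ex := η₂ x) (ey := η₂ y)
        (dx := du x t) (dy := du y t) (a := u y t - u x t)
        hR (hρ0 x y) (hη₂0 x) (hη₂0 y) (hη₂lip x y)
      have h := mul_le_mul_of_nonneg_left hsc (show (0:ℝ) ≤ w x y / 2 by linarith [hw0 x y])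
      ring_nf at h ⊢
      linarith [h]
    -- sum the termwise bound
    have hX2bound : -(1/2) * ∑ x ∈ A, ∑ y ∈ A, w x y * (u y t - u x t) *
          ((η₂ y ^ 2 * du y t - η₂ x ^ 2 * du x t)
            - min (η₂ x) (η₂ y) ^ 2 * (du y t - du x t))
        ≤ (1/4) * (∑ x ∈ B3, ∑ y ∈ A, w x y * (η₂ x ^ 2 * du x t ^ 2 * ρ x y ^ 2
            + η₂ y ^ 2 * du y t ^ 2 * ρ x y ^ 2))
          + (1/R^2) * g3 t := by
      rw [← hX2res]
      have e0 : -(1/2) * ∑ x ∈ B3, ∑ y ∈ A, w x y * (u y t - u x t) *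
            ((η₂ y ^ 2 * du y t - η₂ x ^ 2 * du x t)
              - min (η₂ x) (η₂ y) ^ 2 * (du y t - du x t))
          = ∑ x ∈ B3, ∑ y ∈ A, -((1/2) * (w x y * (u y t - u x t) *
            ((η₂ y ^ 2 * du y t - η₂ x ^ 2 * du x t)
              - min (η₂ x) (η₂ y) ^ 2 * (du y t - du x t)))) := by
        simp only [Finset.mul_sum, Finset.sum_neg_distrib, neg_mul]
      rw [e0]
      have e1 : ∑ x ∈ B3, ∑ y ∈ A,
            ((1/4) * (w x y * (η₂ x ^ 2 * du x t ^ 2 * ρ x y ^ 2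
              + η₂ y ^ 2 * du y t ^ 2 * ρ x y ^ 2))
            + (1/R^2) * (w x y * (u y t - u x t) ^ 2))
          = (1/4) * (∑ x ∈ B3, ∑ y ∈ A, w x y * (η₂ x ^ 2 * du x t ^ 2 * ρ x y ^ 2
              + η₂ y ^ 2 * du y t ^ 2 * ρ x y ^ 2))
            + (1/R^2) * (∑ x ∈ B3, ∑ y ∈ A, w x y * (u y t - u x t) ^ 2) := by
        simp only [Finset.sum_add_distrib, ← Finset.mul_sum]
      have e2 : g3 t = ∑ x ∈ B3, ∑ y ∈ A, w x y * (u y t - u x t) ^ 2 := by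
        rw [hg3def]
        exact Finset.sum_congr rfl fun x _ => hΓ2def x t
      calc ∑ x ∈ B3, ∑ y ∈ A, -((1/2) * (w x y * (u y t - u x t) *
            ((η₂ y ^ 2 * du y t - η₂ x ^ 2 * du x t)
              - min (η₂ x) (η₂ y) ^ 2 * (du y t - du x t))))
          ≤ ∑ x ∈ B3, ∑ y ∈ A,
            ((1/4) * (w x y * (η₂ x ^ 2 * du x t ^ 2 * ρ x y ^ 2
              + η₂ y ^ 2 * du y t ^ 2 * ρ x y ^ 2))
            + (1/R^2) * (w x y * (u y t - u x t) ^ 2)) :=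
            Finset.sum_le_sum fun x hx => Finset.sum_le_sum fun y hy => tb x hx y hy
        _ = _ := by rw [e1, ← e2]
    -- bound the ρ²-weighted sum by 2 F t
    have hHbound : ∑ x ∈ B3, ∑ y ∈ A, w x y * (η₂ x ^ 2 * du x t ^ 2 * ρ x y ^ 2
          + η₂ y ^ 2 * du y t ^ 2 * ρ x y ^ 2) ≤ 2 * F t := by
      have h1 : ∑ x ∈ B3, ∑ y ∈ A, w x y * (η₂ x ^ 2 * du x t ^ 2 * ρ x y ^ 2
            + η₂ y ^ 2 * du y t ^ 2 * ρ x y ^ 2)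
          ≤ ∑ x ∈ A, ∑ y ∈ A, w x y * (η₂ x ^ 2 * du x t ^ 2 * ρ x y ^ 2
            + η₂ y ^ 2 * du y t ^ 2 * ρ x y ^ 2) := by
        refine Finset.sum_le_sum_of_subset_of_nonneg hB3A fun x _ _ => ?_
        refine Finset.sum_nonneg fun y _ => mul_nonneg (hw0 x y) ?_
        have := sq_nonneg (η₂ x * du x t * ρ x y)
        nlinarith [sq_nonneg (η₂ x * du x t * ρ x y), sq_nonneg (η₂ y * du y t * ρ x y)]
      have h2 : ∑ x ∈ A, ∑ y ∈ A, w x y * (η₂ x ^ 2 * du x t ^ 2 * ρ x y ^ 2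
            + η₂ y ^ 2 * du y t ^ 2 * ρ x y ^ 2)
          = (∑ x ∈ A, ∑ y ∈ A, w x y * (η₂ x ^ 2 * du x t ^ 2 * ρ x y ^ 2))
            + ∑ x ∈ A, ∑ y ∈ A, w x y * (η₂ y ^ 2 * du y t ^ 2 * ρ x y ^ 2) := by
        have e1 : ∀ x ∈ A, ∀ y ∈ A, w x y * (η₂ x ^ 2 * du x t ^ 2 * ρ x y ^ 2
              + η₂ y ^ 2 * du y t ^ 2 * ρ x y ^ 2)
            = w x y * (η₂ x ^ 2 * du x t ^ 2 * ρ x y ^ 2)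
              + w x y * (η₂ y ^ 2 * du y t ^ 2 * ρ x y ^ 2) := fun x _ y _ => by ring
        rw [Finset.sum_congr rfl fun x hx => Finset.sum_congr rfl fun y hy => e1 x hx y hy]
        simp [Finset.sum_add_distrib]
      have h3 : ∑ x ∈ A, ∑ y ∈ A, w x y * (η₂ y ^ 2 * du y t ^ 2 * ρ x y ^ 2)
          = ∑ x ∈ A, ∑ y ∈ A, w x y * (η₂ x ^ 2 * du x t ^ 2 * ρ x y ^ 2) := by
        exact sym_sum A w (fun x y => ρ x y ^ 2) hws
          (fun x y => by show ρ x y ^ 2 = ρ y x ^ 2; rw [hρs x y])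
          (fun v => η₂ v ^ 2 * du v t ^ 2)
      have h4 : ∑ x ∈ A, ∑ y ∈ A, w x y * (η₂ x ^ 2 * du x t ^ 2 * ρ x y ^ 2) ≤ F t := by
        rw [hFdef]
        refine Finset.sum_le_sum fun x _ => ?_
        have e1 : ∑ y ∈ A, w x y * (η₂ x ^ 2 * du x t ^ 2 * ρ x y ^ 2)
            = (η₂ x ^ 2 * du x t ^ 2) * ∑ y ∈ A, w x y * ρ x y ^ 2 := by
          rw [Finset.mul_sum]
          exact Finset.sum_congr rfl fun y _ => by ring
        rw [e1]
        have := mul_le_mul_of_nonneg_left (hρm x)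
          (mul_nonneg (sq_nonneg (η₂ x)) (sq_nonneg (du x t)))
        nlinarith [this]
      linarith [h1, h2 ▸ h1, h3, h4]
    linarith [keyF2, hX2bound, hHbound, hg30 t]
  -- integration, step 1
  have hR2 : (0:ℝ) < R^2 := by positivity
  have hM0' : ∀ t : ℝ, t ≤ 0 → 0 ≤ M t := fun t _ => hM0 t
  have hg30' : ∀ t : ℝ, t ≤ 0 → 0 ≤ g3 t := fun t _ => hg30 t
  have hF0' : ∀ t : ℝ, t ≤ 0 → 0 ≤ F t := fun t _ => hF0 t
  obtain ⟨t₁, ht₁mem, ht₁⟩ := exists_le_integral (g := M) (a := -(4*R^2)) (b := -(2*R^2))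
    (by nlinarith) (hM_cont.mono (fun z hz => le_trans hz.2 (by nlinarith))) (fun t _ => hM0 t)
  have ht₁0 : t₁ ≤ 0 := le_trans ht₁mem.2 (by nlinarith)
  have hMt₁ : M t₁ * (2*R^2) ≤ J := by
    have h1 : (∫ t in Set.Icc (-(4*R^2)) (-(2*R^2)), M t) ≤ J := by
      rw [hJdef]
      exact hmono2 M _ _ _ (by nlinarith) (by nlinarith) hM_cont hM0'
    have e1 : (-(2*R^2) - -(4*R^2)) = 2*R^2 := by ring
    rw [e1] at ht₁
    linarith
  have hFTC1 : (∫ τ in t₁..0, Ed τ) = E 0 - E t₁ := hFTC E Ed t₁ ht₁0 hE_deriv hEd_cont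
  have hmono1 : (∫ τ in t₁..0, (1/4) * g3 τ) ≤ ∫ τ in t₁..0, ((2/R^2) * M τ - Ed τ) := by
    refine hintmono _ _ t₁ ht₁0 (continuousOn_const.mul hg3_cont)
      ((continuousOn_const.mul hM_cont).sub hEd_cont) ?_
    intro τ _ hτ0
    linarith [hcore1 τ hτ0]
  have hsplitint : (∫ τ in t₁..0, ((2/R^2) * M τ - Ed τ))
      = (2/R^2) * (∫ τ in t₁..0, M τ) - (E 0 - E t₁) := by
    rw [intervalIntegral.integral_sub
        (hintegrable (fun τ => (2/R^2) * M τ) _ ht₁0 (continuousOn_const.mul hM_cont))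
        (hintegrable _ _ ht₁0 hEd_cont),
      intervalIntegral.integral_const_mul, hFTC1]
  have hMint : (∫ τ in t₁..0, M τ) ≤ J := by
    rw [← hseteq M t₁ ht₁0, hJdef]
    exact hmono2 M t₁ 0 (-(9*R)^2) (by nlinarith [ht₁mem.1]) le_rfl hM_cont hM0'
  have hg3int1 : (∫ τ in Set.Icc (-(2*R^2)) (0:ℝ), g3 τ) ≤ (10/R^2) * J := by
    have h1 : (∫ τ in Set.Icc (-(2*R^2)) (0:ℝ), g3 τ) ≤ ∫ τ in t₁..0, g3 τ := by
      rw [← hseteq g3 t₁ ht₁0]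
      exact hmono2 g3 (-(2*R^2)) 0 t₁ ht₁mem.2 le_rfl hg3_cont hg30'
    have h2 : (1/4) * (∫ τ in t₁..0, g3 τ) ≤ (2/R^2) * J + M t₁ := by
      have h3 := hmono1
      rw [hsplitint, intervalIntegral.integral_const_mul] at h3
      have hEb : E t₁ ≤ M t₁ := hE_le_M t₁
      have hE00 : 0 ≤ E 0 := hE0 0
      have h5 := mul_le_mul_of_nonneg_left hMint (show (0:ℝ) ≤ 2/R^2 by positivity)
      linarith [h3]
    have hMt₁' : M t₁ ≤ J/(2*R^2) := by
      rw [le_div_iff₀ (by positivity)]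
      linarith [hMt₁]
    have e5 : (2/R^2) * J + J/(2*R^2) = (5/(2*R^2)) * J := by field_simp; ring
    have e6 : (10/R^2) * J = 4 * ((5/(2*R^2)) * J) := by field_simp; ring
    rw [e6]
    have := mul_le_mul_of_nonneg_left h1 (by norm_num : (0:ℝ) ≤ 1/4)
    linarith
  -- integration, step 2
  obtain ⟨t₂, ht₂mem, ht₂⟩ := exists_le_integral (g := g3) (a := -(2*R^2)) (b := -R^2)
    (by nlinarith) (hg3_cont.mono (fun z hz => le_trans hz.2 (by nlinarith))) (fun t _ => hg30 t)
  have ht₂0 : t₂ ≤ 0 := le_trans ht₂mem.2 (by nlinarith)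
  have hg3t₂ : g3 t₂ ≤ (10/R^4) * J := by
    have h1 : (∫ τ in Set.Icc (-(2*R^2)) (-R^2), g3 τ) ≤ ∫ τ in Set.Icc (-(2*R^2)) (0:ℝ), g3 τ :=
      hmono2 g3 _ _ _ le_rfl (by nlinarith) hg3_cont hg30'
    have e2 : (-R^2 - -(2*R^2)) = R^2 := by ring
    rw [e2] at ht₂
    have h3 : g3 t₂ * R^2 ≤ (10/R^2)*J := le_trans ht₂ (le_trans h1 hg3int1)
    have e4 : (10/R^4)*J = ((10/R^2)*J)/R^2 := by ring
    rw [e4, le_div_iff₀ hR2]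
    exact h3
  have hG_le : ∀ τ : ℝ, G τ ≤ g3 τ := by
    intro τ
    rw [hGdef, hg3def]
    have h1 : ∑ x ∈ B3, ∑ y ∈ A, w x y * min (η₂ x) (η₂ y) ^ 2 * (u y τ - u x τ) ^ 2
        = ∑ x ∈ A, ∑ y ∈ A, w x y * min (η₂ x) (η₂ y) ^ 2 * (u y τ - u x τ) ^ 2 := by
      refine Finset.sum_subset hB3A fun x _ hxB3 => ?_
      refine Finset.sum_eq_zero fun y _ => ?_
      have hx3 : ¬ ρ x x₀ ≤ 3*R := fun h => hxB3 ((memB _ x).2 h)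
      push_neg at hx3
      have hηx : η₂ x = 0 := hη₂z x (by linarith)
      rw [hηx, min_eq_left (hη₂0 y)]
      norm_num
    rw [← h1]
    refine Finset.sum_le_sum fun x _ => ?_
    rw [hΓ2def]
    refine Finset.sum_le_sum fun y _ => ?_
    have hμ1 : min (η₂ x) (η₂ y) ≤ 1 := le_trans (min_le_left _ _) (hη₂1 x)
    have hμ0 : (0:ℝ) ≤ min (η₂ x) (η₂ y) := le_min (hη₂0 x) (hη₂0 y)
    have hμsq : min (η₂ x) (η₂ y) ^ 2 ≤ 1 := by nlinarith
    nlinarith [mul_nonneg (hw0 x y) (sq_nonneg (u y τ - u x τ))]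
  have hFTC2 : (∫ τ in t₂..0, Gd τ) = G 0 - G t₂ := hFTC G Gd t₂ ht₂0 hG_deriv hGd_cont
  have hmono3 : (∫ τ in t₂..0, (1/2) * F τ) ≤ ∫ τ in t₂..0, ((1/R^2) * g3 τ - (1/4) * Gd τ) := by
    refine hintmono _ _ t₂ ht₂0 (continuousOn_const.mul hF_cont)
      ((continuousOn_const.mul hg3_cont).sub (continuousOn_const.mul hGd_cont)) ?_
    intro τ _ hτ0
    linarith [hcore2 τ hτ0]
  have hsplit3 : (∫ τ in t₂..0, ((1/R^2) * g3 τ - (1/4) * Gd τ))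
      = (1/R^2) * (∫ τ in t₂..0, g3 τ) - (1/4) * (G 0 - G t₂) := by
    rw [intervalIntegral.integral_sub
        (hintegrable (fun τ => (1/R^2) * g3 τ) _ ht₂0 (continuousOn_const.mul hg3_cont))
        (hintegrable (fun τ => (1/4) * Gd τ) _ ht₂0 (continuousOn_const.mul hGd_cont)),
      intervalIntegral.integral_const_mul, intervalIntegral.integral_const_mul, hFTC2]
  have hFint2 : (∫ τ in Set.Icc (-R^2) (0:ℝ), F τ) ≤ (25/R^4) * J := by
    have h1 : (∫ τ in Set.Icc (-R^2) (0:ℝ), F τ) ≤ ∫ τ in t₂..0, F τ := by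
      rw [← hseteq F t₂ ht₂0]
      exact hmono2 F (-R^2) 0 t₂ ht₂mem.2 le_rfl hF_cont hF0'
    have hg3int2 : (∫ τ in t₂..0, g3 τ) ≤ (10/R^2) * J := by
      rw [← hseteq g3 t₂ ht₂0]
      exact le_trans (hmono2 g3 t₂ 0 (-(2*R^2)) ht₂mem.1 le_rfl hg3_cont hg30') hg3int1
    have h2 := hmono3
    rw [hsplit3, intervalIntegral.integral_const_mul] at h2
    have hG00 : 0 ≤ G 0 := hG0 0
    have hGt₂ : G t₂ ≤ g3 t₂ := hG_le t₂
    have h6 := mul_le_mul_of_nonneg_left hg3int2 (show (0:ℝ) ≤ 1/R^2 by positivity)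
    have e1 : (1/R^2)*((10/R^2)*J) = (10/R^4)*J := by ring
    have e3 : (25/R^4)*J = 2*((10/R^4)*J + (1/4)*((10/R^4)*J)) := by ring
    rw [e3]
    have h7 : (1/2) * (∫ τ in t₂..0, F τ) ≤ (10/R^4)*J + (1/4)*((10/R^4)*J) := by
      linarith [hg3t₂]
    linarith [h1, h7]
  -- final assembly
  have hJ0 : 0 ≤ J := by
    rw [hJdef]
    exact setIntegral_nonneg measurableSet_Icc fun t _ => hM0 t
  have hI1 : (∫ t in Set.Icc (-R^2) (0:ℝ), ∑ x ∈ B1,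
        ((1 / (2 * m x)) * ∑ᶠ (y:V), w x y * (u y t - u x t) ^ 2) * m x)
      = ∫ t in Set.Icc (-R^2) (0:ℝ), (1/2) * ∑ x ∈ B1, Γ2 x t := by
    refine integral_congr_ae (Filter.Eventually.of_forall fun t => ?_)
    show (∑ x ∈ B1, ((1 / (2 * m x)) * ∑ᶠ (y:V), w x y * (u y t - u x t) ^ 2) * m x)
      = (1/2) * ∑ x ∈ B1, Γ2 x t
    rw [Finset.mul_sum]
    refine Finset.sum_congr rfl fun x hx => ?_
    have hd8 : ρ x x₀ ≤ 8*R := le_trans ((memB _ x).1 hx) (by linarith)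
    rw [hΓ2_rep x hd8 t]
    field_simp [hm0 x]
  have hI2eq : (∫ t in Set.Icc (-R^2) (0:ℝ), ∑ x ∈ B1,
        ((∑ᶠ (y:V), w x y * (u y t - u x t)) / m x) ^ 2 * m x)
      = ∫ t in Set.Icc (-R^2) (0:ℝ), ∑ x ∈ B1, (du x t)^2 * m x := by
    refine integral_congr_ae (Filter.Eventually.of_forall fun t => ?_)
    show (∑ x ∈ B1, ((∑ᶠ (y:V), w x y * (u y t - u x t)) / m x) ^ 2 * m x)
      = ∑ x ∈ B1, (du x t)^2 * m x
    refine Finset.sum_congr rfl fun x _ => ?_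
    rw [hdu]
  have hRHS : (∫ t in Set.Icc (-(9*R)^2) (0:ℝ), ∑ x ∈ A, (u x t)^2 * m x) = J := by
    rw [hJdef]
    exact integral_congr_ae (Filter.Eventually.of_forall fun t => (hMdef t).symm)
  have hsum1_cont : ContinuousOn (fun t => (1/2) * ∑ x ∈ B1, Γ2 x t) (Set.Iic 0) :=
    continuousOn_const.mul (continuousOn_finset_sum _ fun x _ => hΓ2_cont x)
  have hsum2_cont : ContinuousOn (fun t => ∑ x ∈ B1, (du x t)^2 * m x) (Set.Iic 0) :=
    continuousOn_finset_sum _ fun x _ => ((hdu_cont x).pow 2).mul continuousOn_const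
  have hIcc0 : Set.Icc (-R^2) (0:ℝ) ⊆ Set.Iic 0 := fun z hz => hz.2
  have hI1bound : (∫ t in Set.Icc (-R^2) (0:ℝ), (1/2) * ∑ x ∈ B1, Γ2 x t)
      ≤ (1/2) * ((10/R^2) * J) := by
    have hle : ∀ t : ℝ, (1/2) * ∑ x ∈ B1, Γ2 x t ≤ (1/2) * g3 t := by
      intro t
      have h1 : ∑ x ∈ B1, Γ2 x t ≤ g3 t := by
        rw [hg3def]
        exact Finset.sum_le_sum_of_subset_of_nonneg hB13 fun x _ _ => hΓ20 x t
      linarith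
    calc (∫ t in Set.Icc (-R^2) (0:ℝ), (1/2) * ∑ x ∈ B1, Γ2 x t)
        ≤ ∫ t in Set.Icc (-R^2) (0:ℝ), (1/2) * g3 t := by
          refine setIntegral_mono_on ((hsum1_cont.mono hIcc0).integrableOn_Icc)
            (((continuousOn_const.mul hg3_cont).mono hIcc0).integrableOn_Icc)
            measurableSet_Icc fun t _ => hle t
      _ = (1/2) * ∫ t in Set.Icc (-R^2) (0:ℝ), g3 t := integral_const_mul _ _
      _ ≤ (1/2) * ((10/R^2) * J) := by
          have h1 : (∫ t in Set.Icc (-R^2) (0:ℝ), g3 t)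
              ≤ ∫ t in Set.Icc (-(2*R^2)) (0:ℝ), g3 t :=
            hmono2 g3 (-R^2) 0 (-(2*R^2)) (by nlinarith) le_rfl hg3_cont hg30'
          linarith [hg3int1]
  have hI2bound : (∫ t in Set.Icc (-R^2) (0:ℝ), ∑ x ∈ B1, (du x t)^2 * m x)
      ≤ (25/R^4) * J := by
    have hle : ∀ t : ℝ, ∑ x ∈ B1, (du x t)^2 * m x ≤ F t := by
      intro t
      rw [hFdef]
      have e1 : ∀ x ∈ B1, (du x t)^2 * m x = η₂ x ^2 * (du x t)^2 * m x := by
        intro x hx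
        rw [hη₂one x ((memB _ x).1 hx)]
        ring
      rw [Finset.sum_congr rfl e1]
      exact Finset.sum_le_sum_of_subset_of_nonneg hB1A fun x _ _ =>
        mul_nonneg (mul_nonneg (sq_nonneg _) (sq_nonneg _)) (hm x).le
    calc (∫ t in Set.Icc (-R^2) (0:ℝ), ∑ x ∈ B1, (du x t)^2 * m x)
        ≤ ∫ t in Set.Icc (-R^2) (0:ℝ), F t := by
          refine setIntegral_mono_on ((hsum2_cont.mono hIcc0).integrableOn_Icc)
            ((hF_cont.mono hIcc0).integrableOn_Icc) measurableSet_Icc fun t _ => hle t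
      _ ≤ (25/R^4) * J := hFint2
  rw [hI1, hI2eq, hRHS]
  have hb1 := mul_le_mul_of_nonneg_left hI1bound (le_of_lt hR2)
  have hb2 := mul_le_mul_of_nonneg_left hI2bound (show (0:ℝ) ≤ R^4 by positivity)
  have e1 : R^2 * ((1/2) * ((10/R^2) * J)) = 5*J := by field_simp; ring
  have e2 : R^4 * ((25/R^4) * J) = 25*J := by field_simp
  rw [e1] at hb1
  rw [e2] at hb2
  linarith
end

section
/- Gradient Caccioppoli estimate: there is a universal constant C such that for any ancient solution u of ∂_t u = Δu on V × (−∞, 0] and any R ≥ s, ∫_{Q_R} Γ(u) ≤ (C/R²)·∫_{Q_{3R}} u². -/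
open scoped BigOperators
open MeasureTheory

lemma gc_clamp_lip (a b : ℝ) : |max 0 (min 1 a) - max 0 (min 1 b)| ≤ |a - b| := by
  calc |max 0 (min 1 a) - max 0 (min 1 b)|
      = |max (min 1 a) 0 - max (min 1 b) 0| := by rw [max_comm, max_comm (min 1 b)]
    _ ≤ |min 1 a - min 1 b| := abs_max_sub_max_le_abs _ _ _
    _ ≤ |a - b| := by simpa using abs_min_sub_min_le_max 1 a 1 b

lemma gc_pair_ineq (p q ax ay : ℝ) :
    -((q^2*ay - p^2*ax) * (ay - ax)) ≤ -(1/4) * (p^2+q^2) * (ay-ax)^2 + (ax^2+ay^2)*(q-p)^2 := by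
  nlinarith [sq_nonneg ((q+p)*(ay-ax) + 2*(ax+ay)*(q-p)), sq_nonneg ((q-p)*(ax-ay)),
    sq_nonneg ((q-p)*(ax+ay)), sq_nonneg ((p-q)*(ay-ax)), sq_nonneg ((p+q)*(ay-ax))]

lemma gc_sum_estimate {V : Type} (F : Finset V) (w : V → V → ℝ) (φ a : V → ℝ)
    (hsymm : ∀ x y, w x y = w y x) (hnn : ∀ x y, 0 ≤ w x y) :
    (∑ x ∈ F, ∑ y ∈ F, 2 * w x y * (φ x ^ 2 * a x) * (a y - a x)) ≤
      -(1/2) * (∑ x ∈ F, ∑ y ∈ F, w x y * φ x ^ 2 * (a y - a x) ^ 2)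
      + 2 * ∑ x ∈ F, ∑ y ∈ F, w x y * a x ^ 2 * (φ y - φ x) ^ 2 := by
  have hswap : ∀ f : V → V → ℝ,
      ∑ x ∈ F, ∑ y ∈ F, f x y = ∑ x ∈ F, ∑ y ∈ F, f y x := fun f => Finset.sum_comm
  have merge : ∀ f g : V → V → ℝ,
      (∑ x ∈ F, ∑ y ∈ F, f x y) + (∑ x ∈ F, ∑ y ∈ F, g x y)
        = ∑ x ∈ F, ∑ y ∈ F, (f x y + g x y) := by
    intro f g
    rw [← Finset.sum_add_distrib]
    exact Finset.sum_congr rfl fun x _ => (Finset.sum_add_distrib).symm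
  have e1 : ∀ c : ℝ, ∀ f : V → V → ℝ,
      c * (∑ x ∈ F, ∑ y ∈ F, f x y) = ∑ x ∈ F, ∑ y ∈ F, c * f x y := by
    intro c f
    rw [Finset.mul_sum]
    exact Finset.sum_congr rfl fun x _ => Finset.mul_sum _ _ _
  set L := ∑ x ∈ F, ∑ y ∈ F, 2 * w x y * (φ x ^ 2 * a x) * (a y - a x) with hL
  set T := ∑ x ∈ F, ∑ y ∈ F, w x y * φ x ^ 2 * (a y - a x) ^ 2 with hT
  set X := ∑ x ∈ F, ∑ y ∈ F, w x y * a x ^ 2 * (φ y - φ x) ^ 2 with hX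
  have hTswap : (∑ x ∈ F, ∑ y ∈ F, w x y * φ y ^ 2 * (a y - a x) ^ 2) = T := by
    rw [hswap (fun x y => w x y * φ y ^ 2 * (a y - a x) ^ 2), hT]
    refine Finset.sum_congr rfl fun x _ => Finset.sum_congr rfl fun y _ => ?_
    rw [hsymm y x]; ring
  have hXswap : (∑ x ∈ F, ∑ y ∈ F, w x y * a y ^ 2 * (φ y - φ x) ^ 2) = X := by
    rw [hswap (fun x y => w x y * a y ^ 2 * (φ y - φ x) ^ 2), hX]
    refine Finset.sum_congr rfl fun x _ => Finset.sum_congr rfl fun y _ => ?_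
    rw [hsymm y x]; ring
  have h2L : 2 * L = ∑ x ∈ F, ∑ y ∈ F,
      (2 * w x y * (φ x ^ 2 * a x) * (a y - a x) + 2 * w x y * (φ y ^ 2 * a y) * (a x - a y)) := by
    rw [two_mul]
    nth_rewrite 2 [hL]
    rw [hswap (fun x y => 2 * w x y * (φ x ^ 2 * a x) * (a y - a x))]
    rw [hL, ← Finset.sum_add_distrib]
    refine Finset.sum_congr rfl fun x _ => ?_
    rw [← Finset.sum_add_distrib]
    refine Finset.sum_congr rfl fun y _ => ?_
    rw [hsymm y x]
  have hpairsum : 2 * L ≤ ∑ x ∈ F, ∑ y ∈ F,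
      (-(1/2) * (w x y * φ x ^ 2 * (a y - a x) ^ 2)
        + -(1/2) * (w x y * φ y ^ 2 * (a y - a x) ^ 2)
        + (2 * (w x y * a x ^ 2 * (φ y - φ x) ^ 2) + 2 * (w x y * a y ^ 2 * (φ y - φ x) ^ 2))) := by
    rw [h2L]
    refine Finset.sum_le_sum fun x _ => Finset.sum_le_sum fun y _ => ?_
    have h := gc_pair_ineq (φ x) (φ y) (a x) (a y)
    calc 2 * w x y * (φ x ^ 2 * a x) * (a y - a x) + 2 * w x y * (φ y ^ 2 * a y) * (a x - a y)
        = 2 * w x y * (-((φ y ^ 2 * a y - φ x ^ 2 * a x) * (a y - a x))) := by ring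
      _ ≤ 2 * w x y * (-(1/4) * (φ x ^ 2 + φ y ^ 2) * (a y - a x) ^ 2
            + (a x ^ 2 + a y ^ 2) * (φ y - φ x) ^ 2) := by
          apply mul_le_mul_of_nonneg_left h (by linarith [hnn x y])
      _ = _ := by ring
  have hsplit : (∑ x ∈ F, ∑ y ∈ F,
      (-(1/2) * (w x y * φ x ^ 2 * (a y - a x) ^ 2)
        + -(1/2) * (w x y * φ y ^ 2 * (a y - a x) ^ 2)
        + (2 * (w x y * a x ^ 2 * (φ y - φ x) ^ 2) + 2 * (w x y * a y ^ 2 * (φ y - φ x) ^ 2))))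
      = -(1/2) * T
        + -(1/2) * (∑ x ∈ F, ∑ y ∈ F, w x y * φ y ^ 2 * (a y - a x) ^ 2)
        + (2 * X + 2 * (∑ x ∈ F, ∑ y ∈ F, w x y * a y ^ 2 * (φ y - φ x) ^ 2)) := by
    rw [hT, hX, e1, e1, e1, e1, merge, merge, merge]
  rw [hsplit, hTswap, hXswap] at hpairsum
  linarith

lemma gc_div_simp (a b c S : ℝ) (hc : c ≠ 0) :
    a * (S / c * b + b * (S / c)) * c = 2 * (a * b) * S := by
  field_simp; ring

/-- Gradient Caccioppoli estimate -/
theorem gradient_caccioppoli :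
    ∃ C : ℝ, 0 < C ∧
    ∀ (V : Type) (w : V → V → ℝ) (m : V → ℝ) (ρ : V → V → ℝ) (x₀ : V) (s : ℝ),
      (∀ x y, w x y = w y x) → (∀ x y, 0 ≤ w x y) →
      (∀ x, {y | w x y ≠ 0}.Finite) → (∀ x, 0 < m x) →
      (∀ x y, ρ x y = ρ y x) → (∀ x y, 0 ≤ ρ x y) → (∀ x, ρ x x = 0) →
      (∀ x y z, ρ x z ≤ ρ x y + ρ y z) →
      (∀ x, ∑ᶠ y : V, w x y * ρ x y ^ 2 ≤ m x) →
      ∀ hball : ∀ (x : V) (r : ℝ), {y | ρ y x ≤ r}.Finite,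
      (∀ x y, w x y ≠ 0 → ρ x y ≤ s) →
      ∀ u : V → ℝ → ℝ,
        (∀ x t, t ≤ 0 →
          HasDerivWithinAt (u x) ((∑ᶠ y : V, w x y * (u y t - u x t)) / m x) (Set.Iic 0) t) →
      ∀ R : ℝ, s ≤ R →
        (∫ t in Set.Icc (-R ^ 2) (0 : ℝ),
            ∑ x ∈ (hball x₀ R).toFinset,
              ((1 / (2 * m x)) * ∑ᶠ y : V, w x y * (u y t - u x t) ^ 2) * m x)
        ≤ (C / R ^ 2) * ∫ t in Set.Icc (-(3 * R) ^ 2) (0 : ℝ),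
            ∑ x ∈ (hball x₀ (3 * R)).toFinset, (u x t) ^ 2 * m x := by
  refine ⟨3, by norm_num, ?_⟩
  intro V w m ρ x₀ s hws hwnn hwfin hm hρs hρnn hρ0 hρtri hint hball hjump u hu R hsR
  rcases lt_trichotomy R 0 with hR | hR | hR
  · -- R < 0 : ball of radius R is empty
    have hempty : (hball x₀ R).toFinset = ∅ := by
      apply Finset.eq_empty_of_forall_notMem
      intro x hx
      have h1 : ρ x x₀ ≤ R := (hball x₀ R).mem_toFinset.mp hx
      have h2 := hρnn x x₀
      linarith
    rw [hempty]
    simp only [Finset.sum_empty, integral_zero]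
    apply mul_nonneg (by positivity)
    apply setIntegral_nonneg measurableSet_Icc
    intro t _
    exact Finset.sum_nonneg fun x _ => mul_nonneg (sq_nonneg _) (hm x).le
  · -- R = 0 : time interval has measure zero
    subst hR
    have h1 : Set.Icc (-(0:ℝ)^2) (0:ℝ) = {(0:ℝ)} := by norm_num
    rw [h1, setIntegral_measure_zero _ (by simp)]
    have : (3:ℝ) / (0:ℝ)^2 = 0 := by norm_num
    rw [this, zero_mul]
  · -- main case 0 < R
    -- main case 0 < R
    classical
    have hR2 : (0:ℝ) < R^2 := by positivity
    set F := (hball x₀ (3*R)).toFinset with hF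
    have hmemF : ∀ x : V, x ∈ F ↔ ρ x x₀ ≤ 3*R := fun x => (hball x₀ (3*R)).mem_toFinset
    set φ : V → ℝ := fun x => max 0 (min 1 ((2*R - ρ x x₀)/R)) with hφ
    have hφ0 : ∀ x, 0 ≤ φ x := fun x => le_max_left _ _
    have hφ1 : ∀ x, φ x ≤ 1 := fun x => max_le zero_le_one (min_le_left _ _)
    have hφone : ∀ x, ρ x x₀ ≤ R → φ x = 1 := by
      intro x hx
      have h1 : (1:ℝ) ≤ (2*R - ρ x x₀)/R := by
        rw [le_div_iff₀ hR]; linarith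
      rw [hφ]
      simp only []
      rw [min_eq_left h1, max_eq_right zero_le_one]
    have hφsupp : ∀ x, φ x ≠ 0 → ρ x x₀ < 2*R := by
      intro x hx
      by_contra hc
      push_neg at hc
      apply hx
      have h1 : (2*R - ρ x x₀)/R ≤ 0 := div_nonpos_of_nonpos_of_nonneg (by linarith) hR.le
      have h2 : min 1 ((2*R - ρ x x₀)/R) ≤ 0 := le_trans (min_le_right _ _) h1
      rw [hφ]
      simp only []
      exact max_eq_left h2
    have hρdiff : ∀ x y : V, |ρ x x₀ - ρ y x₀| ≤ ρ x y := by
      intro x y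
      rw [abs_sub_le_iff]
      constructor
      · have := hρtri x y x₀; linarith
      · have h1 := hρtri y x x₀
        have h2 := hρs y x
        linarith
    have hφlipsq : ∀ x y : V, (φ y - φ x)^2 ≤ ρ x y^2 / R^2 := by
      intro x y
      have h1 : |φ x - φ y| ≤ |(2*R - ρ x x₀)/R - (2*R - ρ y x₀)/R| := gc_clamp_lip _ _
      have h2 : (2*R - ρ x x₀)/R - (2*R - ρ y x₀)/R = (ρ y x₀ - ρ x x₀)/R := by ring
      have h3 : |φ x - φ y| ≤ ρ x y / R := by
        rw [h2] at h1
        calc |φ x - φ y| ≤ |(ρ y x₀ - ρ x x₀)/R| := h1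
          _ = |ρ y x₀ - ρ x x₀| / R := by rw [abs_div, abs_of_pos hR]
          _ ≤ ρ x y / R := by
              gcongr
              rw [abs_sub_comm]; exact hρdiff x y
      calc (φ y - φ x)^2 = |φ x - φ y|^2 := by rw [sq_abs]; ring
        _ ≤ (ρ x y / R)^2 := pow_le_pow_left₀ (abs_nonneg _) h3 2
        _ = ρ x y^2 / R^2 := div_pow _ _ _
    have hnbr : ∀ x y, w x y ≠ 0 → ρ x x₀ ≤ 2*R → y ∈ F := by
      intro x y hwxy hx
      rw [hmemF]
      have h1 := hρtri y x x₀
      have h2 := hjump x y hwxy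
      have h3 := hρs y x
      linarith
    have hNsum : ∀ (x : V) (f : V → ℝ), (∀ y, w x y = 0 → f y = 0) →
        (∑ᶠ y, f y) = ∑ y ∈ (hwfin x).toFinset, f y := by
      intro x f hf
      apply finsum_eq_sum_of_support_subset
      intro y hy
      rw [Set.Finite.coe_toFinset]
      exact fun h0 => hy (hf y h0)
    have hNF : ∀ (x : V), ρ x x₀ < 2*R → ∀ (f : V → ℝ), (∀ y, w x y = 0 → f y = 0) →
        (∑ y ∈ (hwfin x).toFinset, f y) = ∑ y ∈ F, f y := by
      intro x hx f hf
      have h1 : (∑ y ∈ (hwfin x).toFinset, f y) = ∑ y ∈ (hwfin x).toFinset ∪ F, f y :=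
        Finset.sum_subset Finset.subset_union_left (fun y _ hy => hf y (by
          by_contra hc; exact hy ((hwfin x).mem_toFinset.mpr hc)))
      have h2 : (∑ y ∈ F, f y) = ∑ y ∈ (hwfin x).toFinset ∪ F, f y :=
        Finset.sum_subset Finset.subset_union_right (fun y hyu hyF => by
          rcases Finset.mem_union.mp hyu with hyN | hyF2
          · exact absurd (hnbr x y ((hwfin x).mem_toFinset.mp hyN) hx.le) hyF
          · exact absurd hyF2 hyF)
      rw [h1, ← h2]
    have hintF : ∀ x, (∑ y ∈ F, w x y * ρ x y^2) ≤ m x := by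
      intro x
      have h0 : ∀ y, 0 ≤ w x y * ρ x y ^ 2 := fun y => mul_nonneg (hwnn x y) (sq_nonneg _)
      have h1 : (∑ y ∈ F, w x y * ρ x y^2) ≤ ∑ y ∈ F ∪ (hwfin x).toFinset, w x y * ρ x y^2 :=
        Finset.sum_le_sum_of_subset_of_nonneg Finset.subset_union_left (fun y _ _ => h0 y)
      have h2 : (∑ y ∈ (hwfin x).toFinset, w x y * ρ x y^2)
          = ∑ y ∈ F ∪ (hwfin x).toFinset, w x y * ρ x y^2 :=
        Finset.sum_subset Finset.subset_union_right (fun y _ hy => by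
          have : w x y = 0 := by
            by_contra hc; exact hy ((hwfin x).mem_toFinset.mpr hc)
          simp [this])
      have h3 := hint x
      rw [hNsum x (fun y => w x y * ρ x y ^ 2) (fun y h => by simp [h])] at h3
      calc (∑ y ∈ F, w x y * ρ x y^2) ≤ _ := h1
        _ = ∑ y ∈ (hwfin x).toFinset, w x y * ρ x y^2 := h2.symm
        _ ≤ m x := h3
    have hucont : ∀ x : V, ContinuousOn (u x) (Set.Iic 0) :=
      fun x t ht => (hu x t ht).continuousWithinAt
    set Tt : ℝ → ℝ := fun t => ∑ x ∈ F, ∑ y ∈ F, w x y * φ x ^ 2 * (u y t - u x t) ^ 2 with hTt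
    set Gt : ℝ → ℝ := fun t => ∑ x ∈ F, u x t ^ 2 * m x with hGt
    set Et : ℝ → ℝ := fun t => ∑ x ∈ F, φ x ^ 2 * (u x t * u x t) * m x with hEt
    set Dt : ℝ → ℝ := fun t => ∑ x ∈ F,
      φ x ^ 2 * ((∑ᶠ y : V, w x y * (u y t - u x t)) / m x * u x t
        + u x t * ((∑ᶠ y : V, w x y * (u y t - u x t)) / m x)) * m x with hDt
    have hTnn : ∀ t, 0 ≤ Tt t := by
      intro t
      apply Finset.sum_nonneg; intro x _
      apply Finset.sum_nonneg; intro y _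
      exact mul_nonneg (mul_nonneg (hwnn x y) (sq_nonneg _)) (sq_nonneg _)
    have hGnn : ∀ t, 0 ≤ Gt t := by
      intro t
      exact Finset.sum_nonneg fun x _ => mul_nonneg (sq_nonneg _) (hm x).le
    have hEnn : ∀ t, 0 ≤ Et t := by
      intro t
      exact Finset.sum_nonneg fun x _ =>
        mul_nonneg (mul_nonneg (sq_nonneg _) (mul_self_nonneg _)) (hm x).le
    have hEleG : ∀ t, Et t ≤ Gt t := by
      intro t
      apply Finset.sum_le_sum
      intro x _
      have h1 : φ x ^ 2 ≤ 1 := pow_le_one₀ (hφ0 x) (hφ1 x)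
      calc φ x ^ 2 * (u x t * u x t) * m x
          ≤ 1 * (u x t * u x t) * m x := by
            apply mul_le_mul_of_nonneg_right _ (hm x).le
            exact mul_le_mul_of_nonneg_right h1 (mul_self_nonneg _)
        _ = u x t ^ 2 * m x := by ring
    have hTcont : ContinuousOn Tt (Set.Iic 0) := by
      apply continuousOn_finset_sum; intro x _
      apply continuousOn_finset_sum; intro y _
      exact continuousOn_const.mul (((hucont y).sub (hucont x)).pow 2)
    have hGcont : ContinuousOn Gt (Set.Iic 0) := by
      apply continuousOn_finset_sum; intro x _
      exact ((hucont x).pow 2).mul continuousOn_const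
    have hEcont : ContinuousOn Et (Set.Iic 0) := by
      apply continuousOn_finset_sum; intro x _
      exact (continuousOn_const.mul ((hucont x).mul (hucont x))).mul continuousOn_const
    have hE' : ∀ t ∈ Set.Iic (0:ℝ), HasDerivWithinAt Et (Dt t) (Set.Iic 0) t := by
      intro t ht
      rw [hEt, hDt]
      apply HasDerivWithinAt.fun_sum
      intro x _
      exact (((hu x t ht).mul (hu x t ht)).const_mul (φ x ^ 2)).mul_const (m x)
    have hDle : ∀ t : ℝ, Dt t ≤ -(1/2) * Tt t + (2/R^2) * Gt t := by
      intro t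
      have step1 : Dt t = ∑ x ∈ F, ∑ y ∈ F, 2 * w x y * (φ x ^ 2 * u x t) * (u y t - u x t) := by
        rw [hDt]
        refine Finset.sum_congr rfl fun x _ => ?_
        by_cases hφx : φ x = 0
        · simp [hφx]
        · have hx2R := hφsupp x hφx
          rw [hNsum x (fun y => w x y * (u y t - u x t)) (fun y h => by simp [h]),
            hNF x hx2R (fun y => w x y * (u y t - u x t)) (fun y h => by simp [h])]
          have hmx := (hm x).ne'
          rw [gc_div_simp (φ x ^ 2) (u x t) (m x) (∑ y ∈ F, w x y * (u y t - u x t)) hmx]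
          rw [Finset.mul_sum]
          exact Finset.sum_congr rfl fun y _ => by ring
      have step2 : (∑ x ∈ F, ∑ y ∈ F, 2 * w x y * (φ x ^ 2 * u x t) * (u y t - u x t)) ≤
          -(1/2) * (∑ x ∈ F, ∑ y ∈ F, w x y * φ x ^ 2 * (u y t - u x t) ^ 2)
          + 2 * ∑ x ∈ F, ∑ y ∈ F, w x y * u x t ^ 2 * (φ y - φ x) ^ 2 :=
        gc_sum_estimate F w φ (fun x => u x t) hws hwnn
      have step3 : (∑ x ∈ F, ∑ y ∈ F, w x y * u x t ^ 2 * (φ y - φ x) ^ 2)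
          ≤ (1/R^2) * Gt t := by
        have inner : ∀ x, (∑ y ∈ F, w x y * u x t ^ 2 * (φ y - φ x) ^ 2)
            ≤ u x t ^ 2 * (m x / R^2) := by
          intro x
          have h1 : ∀ y ∈ F, w x y * u x t ^ 2 * (φ y - φ x) ^ 2
              ≤ u x t ^ 2 * (w x y * ρ x y ^ 2 / R ^ 2) := by
            intro y _
            have h2 := hφlipsq x y
            have h3 : w x y * (φ y - φ x) ^ 2 ≤ w x y * (ρ x y ^ 2 / R ^ 2) :=
              mul_le_mul_of_nonneg_left h2 (hwnn x y)
            calc w x y * u x t ^ 2 * (φ y - φ x) ^ 2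
                = u x t ^ 2 * (w x y * (φ y - φ x) ^ 2) := by ring
              _ ≤ u x t ^ 2 * (w x y * (ρ x y ^ 2 / R ^ 2)) :=
                  mul_le_mul_of_nonneg_left h3 (sq_nonneg _)
              _ = u x t ^ 2 * (w x y * ρ x y ^ 2 / R ^ 2) := by ring
          calc (∑ y ∈ F, w x y * u x t ^ 2 * (φ y - φ x) ^ 2)
              ≤ ∑ y ∈ F, u x t ^ 2 * (w x y * ρ x y ^ 2 / R ^ 2) := Finset.sum_le_sum h1
            _ = u x t ^ 2 * ((∑ y ∈ F, w x y * ρ x y ^ 2) / R ^ 2) := by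
                rw [Finset.sum_div, Finset.mul_sum]
            _ ≤ u x t ^ 2 * (m x / R ^ 2) := by
                apply mul_le_mul_of_nonneg_left _ (sq_nonneg _)
                exact (div_le_div_iff_of_pos_right hR2).mpr (hintF x)
        calc (∑ x ∈ F, ∑ y ∈ F, w x y * u x t ^ 2 * (φ y - φ x) ^ 2)
            ≤ ∑ x ∈ F, u x t ^ 2 * (m x / R ^ 2) := Finset.sum_le_sum fun x _ => inner x
          _ = (1/R^2) * Gt t := by
              rw [show Gt t = ∑ x ∈ F, u x t ^ 2 * m x from rfl, Finset.mul_sum]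
              exact Finset.sum_congr rfl fun x _ => by ring
      have eT : Tt t = ∑ x ∈ F, ∑ y ∈ F, w x y * φ x ^ 2 * (u y t - u x t) ^ 2 := rfl
      have eG2 : (2/R^2) * Gt t = 2 * ((1/R^2) * Gt t) := by ring
      rw [step1]
      linarith [step2, step3, eT, eG2]
    have h9R0 : -(3*R)^2 ≤ (0:ℝ) := by nlinarith
    have hr0 : -R^2 ≤ (0:ℝ) := by nlinarith
    have h2R1 : (-(2*R^2)) ≤ -R^2 := by nlinarith
    have h9R2 : -(3*R)^2 ≤ -(2*R^2) := by nlinarith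
    have h2R0 : (-(2*R^2)) ≤ (0:ℝ) := by nlinarith
    have hsubIic : ∀ a b : ℝ, b ≤ 0 → a ≤ b → Set.uIcc a b ⊆ Set.Iic 0 := by
      intro a b hb0 hab z hz
      rw [Set.uIcc_of_le hab] at hz
      exact le_trans hz.2 hb0
    have hTint : ∀ a b : ℝ, a ≤ b → b ≤ 0 → IntervalIntegrable Tt volume a b :=
      fun a b hab hb0 => (hTcont.mono (hsubIic a b hb0 hab)).intervalIntegrable
    have hGint : ∀ a b : ℝ, a ≤ b → b ≤ 0 → IntervalIntegrable Gt volume a b :=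
      fun a b hab hb0 => (hGcont.mono (hsubIic a b hb0 hab)).intervalIntegrable
    have hEint : ∀ a b : ℝ, a ≤ b → b ≤ 0 → IntervalIntegrable Et volume a b :=
      fun a b hab hb0 => (hEcont.mono (hsubIic a b hb0 hab)).intervalIntegrable
    have key : ∀ t₀ ∈ Set.Icc (-(2*R^2)) (-R^2),
        (1/2) * (∫ τ in (-R^2)..0, Tt τ) - (2/R^2) * (∫ τ in (-(3*R)^2)..0, Gt τ) ≤ Et t₀ := by
      intro t₀ ht₀
      have ht₀0 : t₀ ≤ 0 := le_trans ht₀.2 hr0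
      have hIcc0 : Set.Icc t₀ (0:ℝ) ⊆ Set.Iic 0 := fun z hz => hz.2
      have ftc : Et 0 - Et t₀ ≤ ∫ τ in t₀..0, (-(1/2) * Tt τ + (2/R^2) * Gt τ) := by
        refine intervalIntegral.sub_le_integral_of_hasDeriv_right_of_le (g' := Dt)
          (φ := fun τ => -(1/2) * Tt τ + (2/R^2) * Gt τ) ht₀0
          (hEcont.mono hIcc0) ?_ ?_ ?_
        · intro x hx
          exact ((hE' x hx.2.le).hasDerivAt (Iic_mem_nhds hx.2)).hasDerivWithinAt
        · apply ContinuousOn.integrableOn_Icc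
          exact (continuousOn_const.mul (hTcont.mono hIcc0)).add
            (continuousOn_const.mul (hGcont.mono hIcc0))
        · intro x _
          exact hDle x
      have hsplitint : (∫ τ in t₀..0, (-(1/2) * Tt τ + (2/R^2) * Gt τ))
          = -(1/2) * (∫ τ in t₀..0, Tt τ) + (2/R^2) * (∫ τ in t₀..0, Gt τ) := by
        rw [intervalIntegral.integral_add ((hTint t₀ 0 ht₀0 le_rfl).const_mul _)
          ((hGint t₀ 0 ht₀0 le_rfl).const_mul _),
          intervalIntegral.integral_const_mul, intervalIntegral.integral_const_mul]
      rw [hsplitint] at ftc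
      have hmono1 : (∫ τ in (-R^2)..0, Tt τ) ≤ ∫ τ in t₀..0, Tt τ := by
        have hadj := intervalIntegral.integral_add_adjacent_intervals
          (hTint t₀ (-R^2) ht₀.2 hr0) (hTint (-R^2) 0 hr0 le_rfl)
        have hpos : 0 ≤ ∫ τ in t₀..(-R^2), Tt τ :=
          intervalIntegral.integral_nonneg ht₀.2 (fun z _ => hTnn z)
        linarith
      have hmono2 : (∫ τ in t₀..0, Gt τ) ≤ ∫ τ in (-(3*R)^2)..0, Gt τ := by
        have hadj := intervalIntegral.integral_add_adjacent_intervals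
          (hGint (-(3*R)^2) t₀ (le_trans h9R2 ht₀.1) ht₀0) (hGint t₀ 0 ht₀0 le_rfl)
        have hpos : 0 ≤ ∫ τ in (-(3*R)^2)..t₀, Gt τ :=
          intervalIntegral.integral_nonneg (le_trans h9R2 ht₀.1) (fun z _ => hGnn z)
        linarith
      have hE0 : 0 ≤ Et 0 := hEnn 0
      have h2Rpos : (0:ℝ) ≤ 2/R^2 := by positivity
      have hm2 := mul_le_mul_of_nonneg_left hmono2 h2Rpos
      linarith
    set IT := (∫ τ in (-R^2)..0, Tt τ) with hIT
    set IG := (∫ τ in (-(3*R)^2)..0, Gt τ) with hIG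
    have avg : ((1/2) * IT - (2/R^2) * IG) * R^2 ≤ ∫ τ in (-(2*R^2))..(-R^2), Et τ := by
      have hmon := intervalIntegral.integral_mono_on (f := fun _ => (1/2) * IT - (2/R^2) * IG)
        h2R1 intervalIntegrable_const (hEint _ _ h2R1 hr0) key
      rw [intervalIntegral.integral_const] at hmon
      have heq : ((-R^2) - (-(2*R^2))) • ((1/2) * IT - (2/R^2) * IG)
          = ((1/2) * IT - (2/R^2) * IG) * R^2 := by
        rw [smul_eq_mul]; ring
      rw [heq] at hmon
      exact hmon
    have avg2 : (∫ τ in (-(2*R^2))..(-R^2), Et τ) ≤ IG := by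
      have s1 : (∫ τ in (-(2*R^2))..(-R^2), Et τ) ≤ ∫ τ in (-(2*R^2))..(-R^2), Gt τ :=
        intervalIntegral.integral_mono_on h2R1 (hEint _ _ h2R1 hr0) (hGint _ _ h2R1 hr0)
          (fun z _ => hEleG z)
      have hadj1 := intervalIntegral.integral_add_adjacent_intervals
        (hGint (-(3*R)^2) (-(2*R^2)) h9R2 h2R0) (hGint (-(2*R^2)) (-R^2) h2R1 hr0)
      have hadj2 := intervalIntegral.integral_add_adjacent_intervals
        (hGint (-(3*R)^2) (-R^2) (le_trans h9R2 h2R1) hr0) (hGint (-R^2) 0 hr0 le_rfl)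
      have hp1 : 0 ≤ ∫ τ in (-(3*R)^2)..(-(2*R^2)), Gt τ :=
        intervalIntegral.integral_nonneg h9R2 (fun z _ => hGnn z)
      have hp2 : 0 ≤ ∫ τ in (-R^2)..0, Gt τ :=
        intervalIntegral.integral_nonneg hr0 (fun z _ => hGnn z)
      rw [hIG]
      linarith
    have main : (1/2) * IT ≤ (3/R^2) * IG := by
      have h1 : ((1/2) * IT - (2/R^2) * IG) * R^2 ≤ IG := le_trans avg avg2
      have h2 : (1/2) * IT - (2/R^2) * IG ≤ IG / R^2 := by
        rw [le_div_iff₀ hR2]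
        exact h1
      have e3 : (2/R^2) * IG + IG / R^2 = (3/R^2) * IG := by ring
      linarith
    have hBRF : (hball x₀ R).toFinset ⊆ F := by
      intro x hx
      rw [hmemF]
      have h1 : ρ x x₀ ≤ R := (hball x₀ R).mem_toFinset.mp hx
      linarith
    have hstepx : ∀ (t : ℝ), ∀ x ∈ (hball x₀ R).toFinset,
        ((1 / (2 * m x)) * ∑ᶠ y : V, w x y * (u y t - u x t) ^ 2) * m x
          = ∑ y ∈ F, (1/2) * (w x y * φ x ^ 2 * (u y t - u x t) ^ 2) := by
      intro t x hx
      have hxR : ρ x x₀ ≤ R := (hball x₀ R).mem_toFinset.mp hx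
      rw [hNsum x (fun y => w x y * (u y t - u x t) ^ 2) (fun y h => by simp [h]),
        hNF x (by linarith) (fun y => w x y * (u y t - u x t) ^ 2) (fun y h => by simp [h]),
        hφone x hxR]
      have hmx := (hm x).ne'
      rw [show ((1 / (2 * m x)) * ∑ y ∈ F, w x y * (u y t - u x t) ^ 2) * m x
          = (1/2) * ∑ y ∈ F, w x y * (u y t - u x t) ^ 2 from by
        field_simp]
      rw [Finset.mul_sum]
      exact Finset.sum_congr rfl fun y _ => by ring
    set Pt : ℝ → ℝ := fun t => ∑ x ∈ (hball x₀ R).toFinset, ∑ y ∈ F,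
      (1/2) * (w x y * φ x ^ 2 * (u y t - u x t) ^ 2) with hPt
    have hPcont : ContinuousOn Pt (Set.Iic 0) := by
      apply continuousOn_finset_sum; intro x _
      apply continuousOn_finset_sum; intro y _
      exact continuousOn_const.mul (continuousOn_const.mul (((hucont y).sub (hucont x)).pow 2))
    have hPle : ∀ t, Pt t ≤ (1/2) * Tt t := by
      intro t
      have h1 : Pt t ≤ ∑ x ∈ F, ∑ y ∈ F, (1/2) * (w x y * φ x ^ 2 * (u y t - u x t) ^ 2) :=
        Finset.sum_le_sum_of_subset_of_nonneg hBRF (fun x _ _ => Finset.sum_nonneg fun y _ =>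
          mul_nonneg (by norm_num) (mul_nonneg (mul_nonneg (hwnn x y) (sq_nonneg _)) (sq_nonneg _)))
      have h2 : (∑ x ∈ F, ∑ y ∈ F, (1/2) * (w x y * φ x ^ 2 * (u y t - u x t) ^ 2))
          = (1/2) * Tt t := by
        rw [show Tt t = ∑ x ∈ F, ∑ y ∈ F, w x y * φ x ^ 2 * (u y t - u x t) ^ 2 from rfl,
          Finset.mul_sum]
        exact Finset.sum_congr rfl fun x _ => (Finset.mul_sum _ _ _).symm
      linarith
    have hPint : IntervalIntegrable Pt volume (-R^2) 0 :=
      (hPcont.mono (hsubIic _ _ le_rfl hr0)).intervalIntegrable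
    have final : (∫ t in (-R^2)..(0:ℝ), Pt t) ≤ (3/R^2) * ∫ t in (-(3*R)^2)..(0:ℝ), Gt t := by
      calc (∫ t in (-R^2)..(0:ℝ), Pt t)
          ≤ ∫ t in (-R^2)..(0:ℝ), (1/2) * Tt t := by
            apply intervalIntegral.integral_mono_on hr0 hPint
              ((hTint _ _ hr0 le_rfl).const_mul _)
            exact fun z _ => hPle z
        _ = (1/2) * IT := by rw [intervalIntegral.integral_const_mul, hIT]
        _ ≤ (3/R^2) * IG := main
        _ = (3/R^2) * ∫ t in (-(3*R)^2)..(0:ℝ), Gt t := by rw [hIG]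
    rw [MeasureTheory.integral_Icc_eq_integral_Ioc, MeasureTheory.integral_Icc_eq_integral_Ioc,
      ← intervalIntegral.integral_of_le hr0, ← intervalIntegral.integral_of_le h9R0,
      show (fun t => ∑ x ∈ (hball x₀ R).toFinset,
          ((1 / (2 * m x)) * ∑ᶠ y : V, w x y * (u y t - u x t) ^ 2) * m x) = Pt
        from funext fun t => Finset.sum_congr rfl (hstepx t)]
    exact final
end

section
/- If u(x,t) = ∑_{i=0}^{l} p_i(x)·C(−t, i) for (x,t) ∈ V × ℤ_{≤0} is an ancient solution of the discrete-time heat equation D_t u = Δu, then Δp_l = 0 and Δp_i = −p_{i+1} for 0 ≤ i ≤ l−1. -/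
open scoped BigOperators

/-- Linear independence of binomial coefficients as functions of n. -/
lemma binom_coeff_zero (l : ℕ) (c : ℕ → ℝ)
    (h : ∀ n : ℕ, ∑ i ∈ Finset.range (l + 1), c i * (n.choose i : ℝ) = 0) :
    ∀ i ≤ l, c i = 0 := by
  intro i
  induction i using Nat.strong_induction_on with
  | _ i ih =>
    intro hi
    have h0 := h i
    have : ∑ j ∈ Finset.range (l + 1), c j * ((i).choose j : ℝ) = c i := by
      rw [Finset.sum_eq_single_of_mem i (Finset.mem_range.2 (Nat.lt_succ_of_le hi))]
      · simp
      · intro j hj hji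
        rcases lt_or_gt_of_ne hji with hlt | hgt
        · rw [ih j hlt (le_trans (le_of_lt hlt) hi)]; ring
        · rw [Nat.choose_eq_zero_of_lt hgt]; simp
    rw [this] at h0
    exact h0

/-- If u(x,t) = ∑_{i=0}^{l} p_i(x) C(−t, i) is an ancient solution of the discrete-time heat
equation D_t u = Δu on V × ℤ_{≤0}, then Δp_l = 0 and Δp_i = −p_{i+1} for 0 ≤ i ≤ l−1. -/
theorem binomial_ancient_solution_coefficients
    (V : Type*) (w : V → V → ℝ) (m : V → ℝ)
    (hwsymm : ∀ x y, w x y = w y x) (hwnn : ∀ x y, 0 ≤ w x y)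
    (hloc : ∀ x, {y | w x y ≠ 0}.Finite) (hm : ∀ x, 0 < m x)
    (l : ℕ) (p : ℕ → V → ℝ) (u : V → ℤ → ℝ)
    (hu : ∀ (x : V) (t : ℤ), t ≤ 0 →
      u x t = ∑ i ∈ Finset.range (l + 1), p i x * ((-t).toNat.choose i : ℝ))
    (hheat : ∀ (x : V) (t : ℤ), t ≤ 0 →
      u x t - u x (t - 1) = (∑ᶠ y : V, w x y * (u y t - u x t)) / m x) :
    (∀ x, (∑ᶠ y : V, w x y * (p l y - p l x)) / m x = 0) ∧
    ∀ i < l, ∀ x, (∑ᶠ y : V, w x y * (p i y - p i x)) / m x = -p (i + 1) x := by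
  -- convert finsums over the finite support
  have hfin : ∀ (x : V) (f : V → ℝ), ∑ᶠ y : V, w x y * f y
      = ∑ y ∈ (hloc x).toFinset, w x y * f y := by
    intro x f
    apply finsum_eq_sum_of_support_subset
    intro y hy
    simp only [Function.mem_support] at hy
    simp only [Set.Finite.coe_toFinset, Set.mem_setOf_eq]
    intro hw
    exact hy (by rw [hw]; ring)
  have key : ∀ x, ∀ i ≤ l,
      (∑ᶠ y : V, w x y * (p i y - p i x)) / m x
        + (if i < l then p (i + 1) x else 0) = 0 := by
    intro x
    set S := (hloc x).toFinset with hS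
    set c : ℕ → ℝ := fun i =>
      (∑ y ∈ S, w x y * (p i y - p i x)) / m x
        + (if i < l then p (i + 1) x else 0) with hc
    have hzero : ∀ i ≤ l, c i = 0 := by
      apply binom_coeff_zero
      intro n
      have ht : (-(n : ℤ)) ≤ 0 := by exact_mod_cast neg_nonpos.2 (Int.ofNat_nonneg n)
      have heq := hheat x (-(n : ℤ)) ht
      have hn : (-(-(n : ℤ))).toNat = n := by simp
      have hn1 : (-((-(n : ℤ)) - 1)).toNat = n + 1 := by omega
      -- rewrite u values
      have hux : u x (-(n : ℤ)) = ∑ i ∈ Finset.range (l + 1), p i x * (n.choose i : ℝ) := by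
        rw [hu x _ ht, hn]
      have hux1 : u x ((-(n : ℤ)) - 1)
          = ∑ i ∈ Finset.range (l + 1), p i x * ((n + 1).choose i : ℝ) := by
        rw [hu x _ (by omega), hn1]
      have huy : ∀ y, u y (-(n : ℤ)) = ∑ i ∈ Finset.range (l + 1), p i y * (n.choose i : ℝ) := by
        intro y; rw [hu y _ ht, hn]
      -- RHS as sum over i
      have hrhs : (∑ᶠ y : V, w x y * (u y (-(n:ℤ)) - u x (-(n:ℤ)))) / m x
          = ∑ i ∈ Finset.range (l + 1),
              ((∑ y ∈ S, w x y * (p i y - p i x)) / m x) * (n.choose i : ℝ) := by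
        have : ∀ y, w x y * (u y (-(n:ℤ)) - u x (-(n:ℤ)))
            = ∑ i ∈ Finset.range (l + 1), w x y * (p i y - p i x) * (n.choose i : ℝ) := by
          intro y
          rw [huy y, hux, ← Finset.sum_sub_distrib, Finset.mul_sum]
          congr 1; ext i; ring
        rw [hfin x (fun y => u y (-(n:ℤ)) - u x (-(n:ℤ)))]
        rw [Finset.sum_congr rfl (fun y _ => this y), Finset.sum_comm]
        rw [Finset.sum_div]
        apply Finset.sum_congr rfl
        intro i _
        rw [← Finset.sum_mul, ← hS]
        ring
      rw [hrhs, hux, hux1] at heq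
      -- LHS
      have hlhs : ∑ i ∈ Finset.range (l + 1), p i x * (n.choose i : ℝ)
          - ∑ i ∈ Finset.range (l + 1), p i x * ((n + 1).choose i : ℝ)
          = - ∑ j ∈ Finset.range l, p (j + 1) x * (n.choose j : ℝ) := by
        have hch : ∀ k ∈ Finset.range l, p (k + 1) x * (((n + 1)).choose (k + 1) : ℝ)
            = p (k + 1) x * (n.choose k : ℝ) + p (k + 1) x * (n.choose (k + 1) : ℝ) := by
          intro k _; rw [Nat.choose_succ_succ]; push_cast; ring
        rw [Finset.sum_range_succ', Finset.sum_range_succ',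
          Finset.sum_congr rfl hch, Finset.sum_add_distrib]
        simp only [Nat.choose_zero_right, Nat.cast_one]
        ring
      -- combine
      have hite : ∑ i ∈ Finset.range (l + 1), (if i < l then p (i + 1) x else 0) * (n.choose i : ℝ)
          = ∑ j ∈ Finset.range l, p (j + 1) x * (n.choose j : ℝ) := by
        rw [Finset.sum_range_succ, if_neg (lt_irrefl l)]
        rw [Finset.sum_congr rfl (fun j hj => by
          rw [if_pos (Finset.mem_range.1 hj)])]
        ring
      calc ∑ i ∈ Finset.range (l + 1), c i * (n.choose i : ℝ)
          = ∑ i ∈ Finset.range (l + 1),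
              (((∑ y ∈ S, w x y * (p i y - p i x)) / m x) * (n.choose i : ℝ)
                + (if i < l then p (i + 1) x else 0) * (n.choose i : ℝ)) := by
            apply Finset.sum_congr rfl; intro i _; rw [hc]; ring
        _ = ∑ i ∈ Finset.range (l + 1),
              ((∑ y ∈ S, w x y * (p i y - p i x)) / m x) * (n.choose i : ℝ)
            + ∑ i ∈ Finset.range (l + 1),
              (if i < l then p (i + 1) x else 0) * (n.choose i : ℝ) := by
            rw [Finset.sum_add_distrib]
        _ = 0 := by rw [← heq, hite, hlhs]; ring
    intro i hi
    have := hzero i hi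
    rw [hc] at this
    rw [hfin x (fun y => p i y - p i x)]
    exact this
  constructor
  · intro x
    have := key x l le_rfl
    rw [if_neg (lt_irrefl l)] at this
    linarith
  · intro i hi x
    have := key x i (le_of_lt hi)
    rw [if_pos hi] at this
    linarith
end
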